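/- arXiv:2602.09395 — 9 statements merged into one kernel-verified Lean document; each statement's English description precedes it below -/
import Mathlib

section
/- Let n ≥ 1, let G : ℝⁿ → ℝⁿ be L-Lipschitz (with respect to the Euclidean norm) for some L ≥ 0, let ρ > 0, let x ∈ ℝⁿ, and let h ∈ ℝⁿ with h ≠ 0. If G(x) ≠ 0, then ‖G(x + ρ·G(x)/‖G(x)‖) − h‖² ≤ 12ρ²L² + 4‖G(x) − h‖². -/
/-- Deterministic core of Lemma 3: if `G : ℝⁿ → ℝⁿ` is `L`-Lipschitz
(Euclidean norm), `ρ > 0`, `h ≠ 0` and `G x ≠ 0`, then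
`‖G (x + ρ • G x / ‖G x‖) - h‖² ≤ 12 ρ² L² + 4 ‖G x - h‖²`. -/
theorem sam_perturbed_gradient_deviation_bound
    (n : ℕ) (hn : 1 ≤ n)
    (G : EuclideanSpace ℝ (Fin n) → EuclideanSpace ℝ (Fin n))
    (L : ℝ) (hL : 0 ≤ L)
    (hLip : ∀ u v : EuclideanSpace ℝ (Fin n), ‖G u - G v‖ ≤ L * ‖u - v‖)
    (ρ : ℝ) (hρ : 0 < ρ)
    (x h : EuclideanSpace ℝ (Fin n)) (hh : h ≠ 0)
    (hGx : G x ≠ 0) :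
    ‖G (x + (ρ / ‖G x‖) • G x) - h‖ ^ 2 ≤ 12 * ρ ^ 2 * L ^ 2 + 4 * ‖G x - h‖ ^ 2 := by
  set y := x + (ρ / ‖G x‖) • G x with hy
  have hGxn : (0:ℝ) < ‖G x‖ := norm_pos_iff.mpr hGx
  have hdist : ‖y - x‖ = ρ := by
    have : y - x = (ρ / ‖G x‖) • G x := by simp [hy]
    rw [this, norm_smul, Real.norm_eq_abs, abs_of_pos (div_pos hρ hGxn),
      div_mul_cancel₀ _ (ne_of_gt hGxn)]
  have h1 : ‖G y - G x‖ ≤ L * ρ := by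
    have := hLip y x; rwa [hdist] at this
  have h2 : ‖G y - h‖ ≤ L * ρ + ‖G x - h‖ := by
    calc ‖G y - h‖ = ‖(G y - G x) + (G x - h)‖ := by rw [sub_add_sub_cancel]
      _ ≤ ‖G y - G x‖ + ‖G x - h‖ := norm_add_le _ _
      _ ≤ L * ρ + ‖G x - h‖ := by linarith
  have h3 : ‖G y - h‖ ^ 2 ≤ (L * ρ + ‖G x - h‖) ^ 2 := by
    apply pow_le_pow_left₀ (norm_nonneg _) h2
  nlinarith [norm_nonneg (G x - h), sq_nonneg (L * ρ - ‖G x - h‖), sq_nonneg (L*ρ), hρ.le]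
end

section
/- Let (Ω, μ) be a probability space, n ≥ 1, L ≥ 0, ρ > 0, σ ≥ 0, x ∈ ℝⁿ, and h ∈ ℝⁿ with h ≠ 0. Let G : ℝⁿ × Ω → ℝⁿ be jointly measurable and suppose that for μ-almost every ω: (i) G(·, ω) is L-Lipschitz with respect to the Euclidean norm, and (ii) G(x, ω) ≠ 0. If ∫ ‖G(x, ω) − h‖² dμ(ω) ≤ σ², then ∫ ‖G(x + ρ·G(x, ω)/‖G(x, ω)‖, ω) − h‖² dμ(ω) ≤ 12ρ²L² + 4σ². -/
open MeasureTheory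

/-- First inequality of Lemma 3: for a jointly measurable stochastic
gradient `G` which is a.s. `L`-Lipschitz in its first argument and a.s. nonzero at `x`,
bounded variance `∫ ‖G x ω - h‖² ∂μ ≤ σ²` implies
`∫ ‖G (x + ρ • G x ω / ‖G x ω‖) ω - h‖² ∂μ ≤ 12 ρ² L² + 4 σ²`. -/
theorem sam_perturbed_gradient_variance_bound
    {Ω : Type*} [MeasurableSpace Ω] (μ : Measure Ω) [IsProbabilityMeasure μ]
    (n : ℕ) (hn : 1 ≤ n) (L : ℝ) (hL : 0 ≤ L) (ρ : ℝ) (hρ : 0 < ρ)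
    (σ : ℝ) (hσ : 0 ≤ σ)
    (x h : EuclideanSpace ℝ (Fin n)) (hh : h ≠ 0)
    (G : EuclideanSpace ℝ (Fin n) → Ω → EuclideanSpace ℝ (Fin n))
    (hmeas : Measurable (Function.uncurry G))
    (hLip : ∀ᵐ ω ∂μ, ∀ u v : EuclideanSpace ℝ (Fin n), ‖G u ω - G v ω‖ ≤ L * ‖u - v‖)
    (hne : ∀ᵐ ω ∂μ, G x ω ≠ 0)
    (hvar : ∫ ω, ‖G x ω - h‖ ^ 2 ∂μ ≤ σ ^ 2) :
    ∫ ω, ‖G (x + (ρ / ‖G x ω‖) • G x ω) ω - h‖ ^ 2 ∂μ ≤ 12 * ρ ^ 2 * L ^ 2 + 4 * σ ^ 2 := by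
  set y : Ω → EuclideanSpace ℝ (Fin n) := fun ω => x + (ρ / ‖G x ω‖) • G x ω with hy
  set F : Ω → ℝ := fun ω => ‖G (y ω) ω - h‖ ^ 2 with hF
  set V : Ω → ℝ := fun ω => ‖G x ω - h‖ ^ 2 with hV
  have hGx : Measurable (fun ω => G x ω) :=
    hmeas.comp (measurable_const.prodMk measurable_id)
  have hym : Measurable y :=
    measurable_const.add ((measurable_const.div hGx.norm).smul hGx)
  have hGy : Measurable (fun ω => G (y ω) ω) :=
    hmeas.comp (hym.prodMk measurable_id)
  have hFm : Measurable F := ((hGy.sub measurable_const).norm).pow_const 2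
  have hVm : Measurable V := ((hGx.sub measurable_const).norm).pow_const 2
  -- pointwise a.e. bounds
  have key : ∀ᵐ ω ∂μ, F ω ≤ 2 * (L * ρ) ^ 2 + 2 * V ω ∧
      V ω ≤ 2 * (L * ρ) ^ 2 + 2 * F ω := by
    filter_upwards [hLip, hne] with ω hlip hne0
    have hnorm : ‖y ω - x‖ = ρ := by
      have hGne : ‖G x ω‖ ≠ 0 := norm_ne_zero_iff.mpr hne0
      simp only [hy, add_sub_cancel_left, norm_smul, Real.norm_eq_abs,
        abs_of_nonneg (div_nonneg hρ.le (norm_nonneg _))]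
      field_simp
    have h1 : ‖G (y ω) ω - G x ω‖ ≤ L * ρ := by
      calc ‖G (y ω) ω - G x ω‖ ≤ L * ‖y ω - x‖ := hlip _ _
        _ = L * ρ := by rw [hnorm]
    have h2 : ‖G (y ω) ω - h‖ ≤ ‖G (y ω) ω - G x ω‖ + ‖G x ω - h‖ :=
      norm_sub_le_norm_sub_add_norm_sub _ _ _
    have h3 : ‖G x ω - h‖ ≤ ‖G x ω - G (y ω) ω‖ + ‖G (y ω) ω - h‖ :=
      norm_sub_le_norm_sub_add_norm_sub _ _ _
    have h4 : ‖G x ω - G (y ω) ω‖ = ‖G (y ω) ω - G x ω‖ := norm_sub_rev _ _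
    have hn1 := norm_nonneg (G (y ω) ω - h)
    have hn2 := norm_nonneg (G x ω - h)
    have hn3 := norm_nonneg (G (y ω) ω - G x ω)
    have hA : ‖G (y ω) ω - h‖ ≤ L * ρ + ‖G x ω - h‖ := by linarith
    have hB : ‖G x ω - h‖ ≤ L * ρ + ‖G (y ω) ω - h‖ := by linarith
    have hA2 := mul_self_le_mul_self hn1 hA
    have hB2 := mul_self_le_mul_self hn2 hB
    constructor <;> simp only [hF, hV] <;>
      nlinarith [sq_nonneg (L * ρ - ‖G x ω - h‖), sq_nonneg (L * ρ - ‖G (y ω) ω - h‖)]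
  by_cases hFi : Integrable F μ
  · have hVi : Integrable V μ := by
      refine Integrable.mono' ((integrable_const (2 * (L * ρ) ^ 2)).add (hFi.const_mul 2))
        hVm.aestronglyMeasurable ?_
      filter_upwards [key] with ω hk
      have : (0:ℝ) ≤ V ω := by positivity
      simpa [Real.norm_eq_abs, abs_of_nonneg this] using hk.2
    have hbound : Integrable (fun ω => 2 * (L * ρ) ^ 2 + 2 * V ω) μ :=
      (integrable_const _).add (hVi.const_mul 2)
    have hle : ∫ ω, F ω ∂μ ≤ ∫ ω, (2 * (L * ρ) ^ 2 + 2 * V ω) ∂μ := by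
      refine integral_mono_ae hFi hbound ?_
      filter_upwards [key] with ω hk using hk.1
    have heq : ∫ ω, (2 * (L * ρ) ^ 2 + 2 * V ω) ∂μ
        = 2 * (L * ρ) ^ 2 + 2 * ∫ ω, V ω ∂μ := by
      rw [integral_add (integrable_const _) (hVi.const_mul 2), integral_const,
        integral_const_mul]
      simp
    have hVint : ∫ ω, V ω ∂μ ≤ σ ^ 2 := hvar
    nlinarith [sq_nonneg (L * ρ), sq_nonneg σ, sq_nonneg ρ, sq_nonneg L,
      mul_nonneg (sq_nonneg ρ) (sq_nonneg L)]
  · rw [integral_undef hFi]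
    positivity
end

section
/- Let (Ω, μ) be a probability space, n ≥ 1, L ≥ 0, ρ > 0, σ ≥ 0, x ∈ ℝⁿ, and h ∈ ℝⁿ with h ≠ 0. Let G : ℝⁿ × Ω → ℝⁿ be jointly measurable and suppose that for μ-almost every ω: (i) G(·, ω) is L-Lipschitz with respect to the Euclidean norm, and (ii) G(x, ω) ≠ 0. Suppose moreover that ω ↦ G(x, ω) is Bochner integrable with ∫ G(x, ω) dμ(ω) = h (unbiasedness) and ∫ ‖G(x, ω) − h‖² dμ(ω) ≤ σ². Then ∫ ‖G(x + ρ·G(x, ω)/‖G(x, ω)‖, ω)‖² dμ(ω) ≤ 12ρ²L² + 4σ² + 4‖h‖². -/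
open MeasureTheory

/-- Second inequality of Lemma 3: under a.s. `L`-Lipschitzness,
a.s. nonvanishing at `x`, unbiasedness `∫ G x ω ∂μ = h`, and bounded variance,
the second moment of the stochastic gradient at the SAM-perturbed point satisfies
`∫ ‖G (x + ρ • G x ω / ‖G x ω‖) ω‖² ∂μ ≤ 12 ρ² L² + 4 σ² + 4 ‖h‖²`. -/
theorem sam_perturbed_gradient_second_moment_bound
    {Ω : Type*} [MeasurableSpace Ω] (μ : Measure Ω) [IsProbabilityMeasure μ]
    (n : ℕ) (hn : 1 ≤ n) (L : ℝ) (hL : 0 ≤ L) (ρ : ℝ) (hρ : 0 < ρ)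
    (σ : ℝ) (hσ : 0 ≤ σ)
    (x h : EuclideanSpace ℝ (Fin n)) (hh : h ≠ 0)
    (G : EuclideanSpace ℝ (Fin n) → Ω → EuclideanSpace ℝ (Fin n))
    (hmeas : Measurable (Function.uncurry G))
    (hLip : ∀ᵐ ω ∂μ, ∀ u v : EuclideanSpace ℝ (Fin n), ‖G u ω - G v ω‖ ≤ L * ‖u - v‖)
    (hne : ∀ᵐ ω ∂μ, G x ω ≠ 0)
    (hint : Integrable (fun ω => G x ω) μ)
    (hunbiased : ∫ ω, G x ω ∂μ = h)
    (hvar : ∫ ω, ‖G x ω - h‖ ^ 2 ∂μ ≤ σ ^ 2) :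
    ∫ ω, ‖G (x + (ρ / ‖G x ω‖) • G x ω) ω‖ ^ 2 ∂μ
      ≤ 12 * ρ ^ 2 * L ^ 2 + 4 * σ ^ 2 + 4 * ‖h‖ ^ 2 := by
  have hGx : Measurable (fun ω => G x ω) := hmeas.comp measurable_prodMk_left
  have hy : Measurable (fun ω => x + (ρ / ‖G x ω‖) • G x ω) :=
    measurable_const.add ((measurable_const.div hGx.norm).smul hGx)
  have hf : Measurable (fun ω => ‖G (x + (ρ / ‖G x ω‖) • G x ω) ω‖ ^ 2) :=
    (hmeas.comp (hy.prodMk measurable_id)).norm.pow_const 2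
  -- a.e. facts
  have hρL : 0 ≤ L * ρ := mul_nonneg hL hρ.le
  have hLipρ : ∀ᵐ ω ∂μ, ‖G (x + (ρ / ‖G x ω‖) • G x ω) ω - G x ω‖ ≤ L * ρ := by
    filter_upwards [hLip, hne] with ω hl h0
    have hnorm : ‖(ρ / ‖G x ω‖) • G x ω‖ = ρ := by
      rw [norm_smul, Real.norm_eq_abs, abs_div, abs_of_pos hρ,
        abs_of_nonneg (norm_nonneg _), div_mul_cancel₀]
      exact norm_ne_zero_iff.mpr h0
    have := hl (x + (ρ / ‖G x ω‖) • G x ω) x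
    rwa [add_sub_cancel_left, hnorm] at this
  have key : ∀ᵐ ω ∂μ, ‖G (x + (ρ / ‖G x ω‖) • G x ω) ω‖ ^ 2
      ≤ 3 * (L * ρ) ^ 2 + 3 * ‖G x ω - h‖ ^ 2 + 3 * ‖h‖ ^ 2 := by
    filter_upwards [hLipρ] with ω h1
    set y := x + (ρ / ‖G x ω‖) • G x ω
    have h2 : ‖G y ω‖ ≤ L * ρ + ‖G x ω - h‖ + ‖h‖ := by
      have he : (G y ω - G x ω) + (G x ω - h) + h = G y ω := by abel
      calc ‖G y ω‖ = ‖(G y ω - G x ω) + (G x ω - h) + h‖ := by rw [he]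
        _ ≤ ‖G y ω - G x ω‖ + ‖G x ω - h‖ + ‖h‖ := norm_add₃_le
        _ ≤ L * ρ + ‖G x ω - h‖ + ‖h‖ := by gcongr
    nlinarith [norm_nonneg (G x ω - h), norm_nonneg h, norm_nonneg (G y ω), hρL,
      sq_nonneg (L * ρ - ‖G x ω - h‖), sq_nonneg (L * ρ - ‖h‖),
      sq_nonneg (‖G x ω - h‖ - ‖h‖)]
  by_cases hInt : Integrable (fun ω => ‖G (x + (ρ / ‖G x ω‖) • G x ω) ω‖ ^ 2) μ
  · -- variance term is integrable by comparison
    have hvm : Measurable (fun ω => ‖G x ω - h‖ ^ 2) :=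
      (hGx.sub measurable_const).norm.pow_const 2
    have hbd : ∀ᵐ ω ∂μ, ‖‖G x ω - h‖ ^ 2‖
        ≤ 3 * (L * ρ) ^ 2 + 3 * ‖G (x + (ρ / ‖G x ω‖) • G x ω) ω‖ ^ 2 + 3 * ‖h‖ ^ 2 := by
      filter_upwards [hLipρ] with ω h1
      set y := x + (ρ / ‖G x ω‖) • G x ω
      have h2 : ‖G x ω - h‖ ≤ L * ρ + ‖G y ω‖ + ‖h‖ := by
        have he : (G x ω - G y ω) + G y ω + (-h) = G x ω - h := by abel
        calc ‖G x ω - h‖ = ‖(G x ω - G y ω) + G y ω + (-h)‖ := by rw [he]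
          _ ≤ ‖G x ω - G y ω‖ + ‖G y ω‖ + ‖-h‖ := norm_add₃_le
          _ ≤ L * ρ + ‖G y ω‖ + ‖h‖ := by
              rw [norm_neg, norm_sub_rev]; gcongr
      rw [Real.norm_eq_abs, abs_of_nonneg (by positivity)]
      nlinarith [norm_nonneg (G x ω - h), norm_nonneg h, norm_nonneg (G y ω), hρL,
        sq_nonneg (L * ρ - ‖G y ω‖), sq_nonneg (L * ρ - ‖h‖),
        sq_nonneg (‖G y ω‖ - ‖h‖)]
    have hgInt0 : Integrable (fun ω =>
        3 * (L * ρ) ^ 2 + 3 * ‖G (x + (ρ / ‖G x ω‖) • G x ω) ω‖ ^ 2 + 3 * ‖h‖ ^ 2) μ :=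
      ((integrable_const _).add (hInt.const_mul 3)).add (integrable_const _)
    have hvarInt : Integrable (fun ω => ‖G x ω - h‖ ^ 2) μ :=
      Integrable.mono' hgInt0 hvm.aestronglyMeasurable hbd
    have hgInt : Integrable (fun ω => 3 * (L * ρ) ^ 2 + 3 * ‖G x ω - h‖ ^ 2 + 3 * ‖h‖ ^ 2) μ :=
      ((integrable_const _).add (hvarInt.const_mul 3)).add (integrable_const _)
    have hmono := integral_mono_ae hInt hgInt key
    have hsplit : ∫ ω, (3 * (L * ρ) ^ 2 + 3 * ‖G x ω - h‖ ^ 2 + 3 * ‖h‖ ^ 2) ∂μ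
        = 3 * (L * ρ) ^ 2 + 3 * ∫ ω, ‖G x ω - h‖ ^ 2 ∂μ + 3 * ‖h‖ ^ 2 := by
      have hA : Integrable (fun ω => 3 * (L * ρ) ^ 2 + 3 * ‖G x ω - h‖ ^ 2) μ :=
        (integrable_const _).add (hvarInt.const_mul 3)
      rw [integral_add hA (integrable_const _),
        integral_add (integrable_const _) (hvarInt.const_mul 3),
        integral_const, integral_const, integral_const_mul]
      simp
    rw [hsplit] at hmono
    nlinarith [sq_nonneg σ, sq_nonneg (L * ρ), norm_nonneg h, sq_nonneg ‖h‖]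
  · rw [integral_undef hInt]
    positivity
end

section
/- Let T ≥ 1 be an integer, β₂ ∈ [0, 1), ε > 0, and σ, ρ, L ≥ 0. Write c = 4σ² + 12ρ²L². Let (g_t)_{t=1}^T and (a_t)_{t=1}^T be real sequences with g_t² ≤ 4a_t² + c for every t. Define v₀ = 0, v_t = β₂·v_{t−1} + (1−β₂)·g_t², and ṽ_t = β₂·v_{t−1} + (1−β₂)·(4a_t² + c) for t = 1, …, T. Then ∑_{t=1}^T √(ṽ_t + ε) ≤ 2σT + (4ρL + √ε)T + 8·∑_{t=1}^T a_t² / √(ṽ_t + ε). -/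
/-- Auxiliary summation lemma: for the recursion
`W (i+1) = β₂ W i + (1-β₂) E + 4 (1-β₂) (a (i+1))²` with `W 0 = E > 0`, one has
`∑ √(W (i+1)) ≤ n √E + 8 ∑ a²/√W`. -/
lemma aux_sqrt_sum (β₂ : ℝ) (hβ₂ : 0 ≤ β₂) (hβ₂' : β₂ < 1) (E : ℝ) (hE : 0 < E)
    (a W : ℕ → ℝ) (hW0 : W 0 = E)
    (hWrec : ∀ i, W (i + 1) = β₂ * W i + (1 - β₂) * E + 4 * (1 - β₂) * (a (i + 1)) ^ 2)
    (n : ℕ) :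
    ∑ i ∈ Finset.range n, Real.sqrt (W (i + 1))
      ≤ n * Real.sqrt E
        + 8 * ∑ i ∈ Finset.range n, (a (i + 1)) ^ 2 / Real.sqrt (W (i + 1)) := by
  have hb : (0:ℝ) ≤ 1 - β₂ := by linarith
  have hWE : ∀ i, E ≤ W i := by
    intro i
    induction i with
    | zero => simp [hW0]
    | succ k ih => rw [hWrec]; nlinarith [sq_nonneg (a (k + 1))]
  have hWpos : ∀ i, 0 < W i := fun i => lt_of_lt_of_le hE (hWE i)
  set u := Real.sqrt β₂ with hu
  have hu0 : 0 ≤ u := Real.sqrt_nonneg _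
  have hu2 : u ^ 2 = β₂ := Real.sq_sqrt hβ₂
  have hu1 : u < 1 := by nlinarith
  have hsE : 0 < Real.sqrt E := Real.sqrt_pos.mpr hE
  have hE2 : (Real.sqrt E) ^ 2 = E := Real.sq_sqrt hE.le
  -- per-step inequality
  have step : ∀ i, Real.sqrt (W (i + 1))
      ≤ u * Real.sqrt (W i) + (1 - u) * Real.sqrt E
        + 4 * (1 - β₂) * ((a (i + 1)) ^ 2 / Real.sqrt (W (i + 1))) := by
    intro i
    set x := β₂ * W i + (1 - β₂) * E with hx
    have hxE : E ≤ x := by nlinarith [hWE i]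
    have hx0 : 0 < x := lt_of_lt_of_le hE hxE
    have hW1 : W (i + 1) = x + 4 * (1 - β₂) * (a (i + 1)) ^ 2 := by
      rw [hWrec]; try ring
    have hW1pos := hWpos (i + 1)
    have hsW1 : 0 < Real.sqrt (W (i + 1)) := Real.sqrt_pos.mpr hW1pos
    have hid : Real.sqrt (W (i + 1))
        = x / Real.sqrt (W (i + 1))
          + 4 * (1 - β₂) * ((a (i + 1)) ^ 2 / Real.sqrt (W (i + 1))) := by
      rw [show 4 * (1 - β₂) * ((a (i + 1)) ^ 2 / Real.sqrt (W (i + 1)))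
            = (4 * (1 - β₂) * (a (i + 1)) ^ 2) / Real.sqrt (W (i + 1)) by ring,
          ← add_div, ← hW1, Real.div_sqrt]
    have h1 : x / Real.sqrt (W (i + 1)) ≤ Real.sqrt x := by
      rw [div_le_iff₀ hsW1]
      have hxle : Real.sqrt x ≤ Real.sqrt (W (i + 1)) :=
        Real.sqrt_le_sqrt (by rw [hW1]; nlinarith [sq_nonneg (a (i + 1))])
      nlinarith [Real.sq_sqrt hx0.le, Real.sqrt_nonneg x]
    have h2 : Real.sqrt x ≤ u * Real.sqrt (W i) + (1 - u) * Real.sqrt E := by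
      have hWi2 : (Real.sqrt (W i)) ^ 2 = W i := Real.sq_sqrt (hWpos i).le
      have hWiE : Real.sqrt E ≤ Real.sqrt (W i) := Real.sqrt_le_sqrt (hWE i)
      have hrhs : 0 ≤ u * Real.sqrt (W i) + (1 - u) * Real.sqrt E := by
        nlinarith [Real.sqrt_nonneg (W i)]
      have hsq : x ≤ (u * Real.sqrt (W i) + (1 - u) * Real.sqrt E) ^ 2 := by
        nlinarith [mul_nonneg (mul_nonneg (mul_nonneg (by norm_num : (0:ℝ) ≤ 2) hu0)
          (by linarith : (0:ℝ) ≤ 1 - u)) (by linarith : (0:ℝ) ≤ Real.sqrt (W i) - Real.sqrt E)]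
      calc Real.sqrt x
          ≤ Real.sqrt ((u * Real.sqrt (W i) + (1 - u) * Real.sqrt E) ^ 2) :=
            Real.sqrt_le_sqrt hsq
        _ = u * Real.sqrt (W i) + (1 - u) * Real.sqrt E := Real.sqrt_sq hrhs
    linarith [hid, h1, h2]
  -- sum the per-step inequality
  set s := ∑ i ∈ Finset.range n, Real.sqrt (W (i + 1)) with hs
  set q := ∑ i ∈ Finset.range n, (a (i + 1)) ^ 2 / Real.sqrt (W (i + 1)) with hq
  have hq0 : 0 ≤ q := Finset.sum_nonneg fun i _ =>
    div_nonneg (sq_nonneg _) (Real.sqrt_nonneg _)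
  have hshift : ∑ i ∈ Finset.range n, Real.sqrt (W i) ≤ s := by
    rcases n with _ | m
    · simp [hs]
    · rw [Finset.sum_range_succ' (fun i => Real.sqrt (W i)) m]
      rw [hs, Finset.sum_range_succ (fun i => Real.sqrt (W (i + 1))) m]
      have : Real.sqrt (W 0) ≤ Real.sqrt (W (m + 1)) :=
        Real.sqrt_le_sqrt (hW0 ▸ hWE (m + 1))
      linarith
  have hsum1 : s ≤ u * (∑ i ∈ Finset.range n, Real.sqrt (W i))
      + n * ((1 - u) * Real.sqrt E) + 4 * (1 - β₂) * q := by
    calc s ≤ ∑ i ∈ Finset.range n, (u * Real.sqrt (W i) + (1 - u) * Real.sqrt E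
          + 4 * (1 - β₂) * ((a (i + 1)) ^ 2 / Real.sqrt (W (i + 1)))) :=
        Finset.sum_le_sum fun i _ => step i
      _ = _ := by
        rw [Finset.sum_add_distrib, Finset.sum_add_distrib, Finset.sum_const,
          Finset.card_range, nsmul_eq_mul, ← Finset.mul_sum, ← Finset.mul_sum, hq]
  have hmain : s ≤ u * s + n * ((1 - u) * Real.sqrt E) + 4 * (1 - β₂) * q := by
    have := mul_le_mul_of_nonneg_left hshift hu0
    linarith
  have hfin : (1 - u) * s ≤ (1 - u) * (n * Real.sqrt E + 8 * q) := by
    nlinarith [mul_nonneg hq0 (sq_nonneg (1 - u))]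
  have := le_of_mul_le_mul_left hfin (by linarith : (0:ℝ) < 1 - u)
  linarith

/-- Deterministic per-coordinate form of Lemma 4: with the AdamW
second-moment recursion `v_t = β₂ v_{t-1} + (1-β₂) g_t²` (from `v₀ = 0`), the surrogate
`ṽ_t = β₂ v_{t-1} + (1-β₂)(4 a_t² + c)` where `c = 4σ² + 12ρ²L²`, and the bound
`g_t² ≤ 4 a_t² + c`, one has
`∑ √(ṽ_t+ε) ≤ 2σT + (4ρL + √ε)T + 8 ∑ a_t² / √(ṽ_t+ε)`. -/
theorem adamw_surrogate_second_moment_sum_bound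
    (T : ℕ) (hT : 1 ≤ T)
    (β₂ : ℝ) (hβ₂ : 0 ≤ β₂) (hβ₂' : β₂ < 1)
    (ε : ℝ) (hε : 0 < ε)
    (σ ρ L : ℝ) (hσ : 0 ≤ σ) (hρ : 0 ≤ ρ) (hL : 0 ≤ L)
    (g a v vtil : ℕ → ℝ)
    (hg : ∀ t ∈ Finset.Icc 1 T, (g t) ^ 2 ≤ 4 * (a t) ^ 2 + (4 * σ ^ 2 + 12 * ρ ^ 2 * L ^ 2))
    (hv0 : v 0 = 0)
    (hv : ∀ t ∈ Finset.Icc 1 T, v t = β₂ * v (t - 1) + (1 - β₂) * (g t) ^ 2)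
    (hvtil : ∀ t ∈ Finset.Icc 1 T,
      vtil t = β₂ * v (t - 1) + (1 - β₂) * (4 * (a t) ^ 2 + (4 * σ ^ 2 + 12 * ρ ^ 2 * L ^ 2))) :
    ∑ t ∈ Finset.Icc 1 T, Real.sqrt (vtil t + ε)
      ≤ 2 * σ * T + (4 * ρ * L + Real.sqrt ε) * T
        + 8 * ∑ t ∈ Finset.Icc 1 T, (a t) ^ 2 / Real.sqrt (vtil t + ε) := by
  have hb : (0:ℝ) ≤ 1 - β₂ := by linarith
  have hc0 : (0:ℝ) ≤ 4 * σ ^ 2 + 12 * ρ ^ 2 * L ^ 2 := by positivity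
  have hE : (0:ℝ) < 4 * σ ^ 2 + 12 * ρ ^ 2 * L ^ 2 + ε := by linarith
  obtain ⟨W, hW0, hWrec⟩ : ∃ W : ℕ → ℝ,
      W 0 = 4 * σ ^ 2 + 12 * ρ ^ 2 * L ^ 2 + ε ∧
      ∀ i, W (i + 1) = β₂ * W i + (1 - β₂) * (4 * σ ^ 2 + 12 * ρ ^ 2 * L ^ 2 + ε)
        + 4 * (1 - β₂) * (a (i + 1)) ^ 2 :=
    ⟨fun t => Nat.rec (4 * σ ^ 2 + 12 * ρ ^ 2 * L ^ 2 + ε)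
      (fun i Wi => β₂ * Wi + (1 - β₂) * (4 * σ ^ 2 + 12 * ρ ^ 2 * L ^ 2 + ε)
        + 4 * (1 - β₂) * (a (i + 1)) ^ 2) t, rfl, fun i => rfl⟩
  have hWE : ∀ i, 4 * σ ^ 2 + 12 * ρ ^ 2 * L ^ 2 + ε ≤ W i := by
    intro i
    induction i with
    | zero => rw [hW0]
    | succ k ih => rw [hWrec]; nlinarith [sq_nonneg (a (k + 1))]
  -- v is nonnegative up to time T
  have hvpos : ∀ i, i ≤ T → 0 ≤ v i := by
    intro i
    induction i with
    | zero => intro _; simp [hv0]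
    | succ k ih =>
      intro h
      have hk : k ≤ T := Nat.le_of_succ_le h
      have hmem : (k + 1) ∈ Finset.Icc 1 T :=
        Finset.mem_Icc.mpr ⟨Nat.succ_le_succ (Nat.zero_le k), h⟩
      have h1 := hv (k + 1) hmem
      simp only [Nat.add_sub_cancel] at h1
      rw [h1]
      nlinarith [ih hk, sq_nonneg (g (k + 1))]
  -- v + ε is dominated by W
  have hvW : ∀ i, i ≤ T → v i + ε ≤ W i := by
    intro i
    induction i with
    | zero => intro _; rw [hv0, hW0]; linarith
    | succ k ih =>
      intro h
      have hk : k ≤ T := Nat.le_of_succ_le h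
      have hmem : (k + 1) ∈ Finset.Icc 1 T :=
        Finset.mem_Icc.mpr ⟨Nat.succ_le_succ (Nat.zero_le k), h⟩
      have h1 := hv (k + 1) hmem
      simp only [Nat.add_sub_cancel] at h1
      have h2 := hg (k + 1) hmem
      have h3 := hWrec k
      have h4 := ih hk
      have h5 : 0 ≤ β₂ * (W k - v k - ε) := mul_nonneg hβ₂ (by linarith)
      rw [h1, h3]
      nlinarith
  -- the surrogate + ε is dominated by W, and is positive
  have hVle : ∀ t ∈ Finset.Icc 1 T, vtil t + ε ≤ W t := by
    intro t ht
    obtain ⟨h1t, htT⟩ := Finset.mem_Icc.mp ht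
    obtain ⟨i, rfl⟩ : ∃ i, t = i + 1 := ⟨t - 1, by omega⟩
    have h1 := hvtil (i + 1) ht
    simp only [Nat.add_sub_cancel] at h1
    have h4 := hvW i (by omega)
    have h5 : 0 ≤ β₂ * (W i - v i - ε) := mul_nonneg hβ₂ (by linarith)
    rw [h1, hWrec i]
    nlinarith
  have hVpos : ∀ t ∈ Finset.Icc 1 T, 0 < vtil t + ε := by
    intro t ht
    obtain ⟨h1t, htT⟩ := Finset.mem_Icc.mp ht
    obtain ⟨i, rfl⟩ : ∃ i, t = i + 1 := ⟨t - 1, by omega⟩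
    have h1 := hvtil (i + 1) ht
    simp only [Nat.add_sub_cancel] at h1
    have h4 := hvpos i (by omega)
    rw [h1]
    nlinarith [sq_nonneg (a (i + 1)), mul_nonneg hβ₂ h4]
  -- key summation bound
  have key := aux_sqrt_sum β₂ hβ₂ hβ₂' _ hE a W hW0 hWrec T
  -- transfer along `Icc 1 T` ↔ shifted `range T`
  have hIcc : ∀ f : ℕ → ℝ, ∑ t ∈ Finset.Icc 1 T, f t = ∑ i ∈ Finset.range T, f (i + 1) := by
    intro f
    rw [← Finset.Ico_add_one_right_eq_Icc, Finset.sum_Ico_eq_sum_range]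
    exact Finset.sum_congr rfl fun i _ => by rw [Nat.add_comm]
  have hmem' : ∀ i ∈ Finset.range T, (i + 1) ∈ Finset.Icc 1 T := fun i hi =>
    Finset.mem_Icc.mpr ⟨Nat.succ_le_succ (Nat.zero_le i), Finset.mem_range.mp hi⟩
  have step1 : ∑ t ∈ Finset.Icc 1 T, Real.sqrt (vtil t + ε)
      ≤ ∑ i ∈ Finset.range T, Real.sqrt (W (i + 1)) := by
    rw [hIcc (fun t => Real.sqrt (vtil t + ε))]
    exact Finset.sum_le_sum fun i hi => Real.sqrt_le_sqrt (hVle (i + 1) (hmem' i hi))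
  have step2 : ∑ i ∈ Finset.range T, (a (i + 1)) ^ 2 / Real.sqrt (W (i + 1))
      ≤ ∑ t ∈ Finset.Icc 1 T, (a t) ^ 2 / Real.sqrt (vtil t + ε) := by
    rw [hIcc (fun t => (a t) ^ 2 / Real.sqrt (vtil t + ε))]
    refine Finset.sum_le_sum fun i hi => ?_
    have hpos := hVpos (i + 1) (hmem' i hi)
    have hle := hVle (i + 1) (hmem' i hi)
    exact div_le_div_of_nonneg_left (sq_nonneg _) (Real.sqrt_pos.mpr hpos)
      (Real.sqrt_le_sqrt hle)
  -- bounding the constant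
  have hEbound : Real.sqrt (4 * σ ^ 2 + 12 * ρ ^ 2 * L ^ 2 + ε)
      ≤ 2 * σ + 4 * ρ * L + Real.sqrt ε := by
    have hse : (Real.sqrt ε) ^ 2 = ε := Real.sq_sqrt hε.le
    have hse0 : 0 ≤ Real.sqrt ε := Real.sqrt_nonneg _
    have hrhs0 : 0 ≤ 2 * σ + 4 * ρ * L + Real.sqrt ε := by positivity
    have hsq : 4 * σ ^ 2 + 12 * ρ ^ 2 * L ^ 2 + ε
        ≤ (2 * σ + 4 * ρ * L + Real.sqrt ε) ^ 2 := by
      nlinarith [mul_nonneg (mul_nonneg hσ hρ) hL, mul_nonneg hσ hse0,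
        mul_nonneg (mul_nonneg hρ hL) hse0, sq_nonneg (ρ * L)]
    calc Real.sqrt (4 * σ ^ 2 + 12 * ρ ^ 2 * L ^ 2 + ε)
        ≤ Real.sqrt ((2 * σ + 4 * ρ * L + Real.sqrt ε) ^ 2) := Real.sqrt_le_sqrt hsq
      _ = _ := Real.sqrt_sq hrhs0
  have hT0 : (0:ℝ) ≤ (T:ℝ) := Nat.cast_nonneg T
  have hconst := mul_le_mul_of_nonneg_right hEbound hT0
  calc ∑ t ∈ Finset.Icc 1 T, Real.sqrt (vtil t + ε)
      ≤ ∑ i ∈ Finset.range T, Real.sqrt (W (i + 1)) := step1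
    _ ≤ T * Real.sqrt (4 * σ ^ 2 + 12 * ρ ^ 2 * L ^ 2 + ε)
        + 8 * ∑ i ∈ Finset.range T, (a (i + 1)) ^ 2 / Real.sqrt (W (i + 1)) := key
    _ ≤ T * Real.sqrt (4 * σ ^ 2 + 12 * ρ ^ 2 * L ^ 2 + ε)
        + 8 * ∑ t ∈ Finset.Icc 1 T, (a t) ^ 2 / Real.sqrt (vtil t + ε) := by
        linarith [step2]
    _ ≤ 2 * σ * T + (4 * ρ * L + Real.sqrt ε) * T
        + 8 * ∑ t ∈ Finset.Icc 1 T, (a t) ^ 2 / Real.sqrt (vtil t + ε) := by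
        nlinarith [hconst]
end

section
/- Let d ≥ 1, let f : ℝᵈ → ℝ be differentiable and coordinate-wise L-smooth for some L ≥ 0, fix a coordinate i ∈ {1, …, d}, and let η > 0, λ ≥ 0, ε > 0, β₁ ∈ (0, 1), σ ≥ 0, ρ ≥ 0. Set θ = ⌈1/(1 − β₁^{5/4})⌉. Let (Ω, μ) be a probability space carrying random vectors X, X′ : Ω → ℝᵈ and real random variables M, G, V with V ≥ 0 almost surely, such that almost surely X′_i = X_i − η·(M + λ·X_i·√(V + ε))/√(V + ε), and such that all the squared quantities appearing below are integrable. Define M′ = β₁·M + (1 − β₁)·G, and assume E[(G − ∂_i f(X′))²] ≤ 4σ² + 12ρ²L². Then E[(M′ − ∂_i f(X′))²] ≤ √β₁ · E[(M − ∂_i f(X))²] + (β₁^{3/4}·η²·L² / ((1 − β₁^{1/4})·√ε)) · E[(M + λ·X_i·√(V + ε))² / √(V + ε)] + θ·(1 − β₁)²·(4σ² + 12ρ²L²). -/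
open MeasureTheory

lemma three_term (a b c p q r : ℝ) (hp : 0 < p) (hq : 0 < q) (hr : 0 < r)
    (hsum : p + q + r = 1) :
    (a + b + c) ^ 2 ≤ a ^ 2 / p + b ^ 2 / q + c ^ 2 / r := by
  have id : a^2*(q*r)*(p+q+r) + b^2*(p*r)*(p+q+r) + c^2*(p*q)*(p+q+r)
      - (a+b+c)^2*(p*q*r)
      = r*(a*q-b*p)^2 + q*(a*r-c*p)^2 + p*(b*r-c*q)^2 := by ring
  rw [hsum] at id
  have key : (a + b + c) ^ 2 * (p * q * r)
      ≤ a ^ 2 * (q * r) + b ^ 2 * (p * r) + c ^ 2 * (p * q) := by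
    nlinarith [mul_nonneg hr.le (sq_nonneg (a*q - b*p)),
      mul_nonneg hq.le (sq_nonneg (a*r - c*p)),
      mul_nonneg hp.le (sq_nonneg (b*r - c*q))]
  have hE : a ^ 2 / p + b ^ 2 / q + c ^ 2 / r
      = (a ^ 2 * (q*r) + b ^ 2 * (p*r) + c ^ 2 * (p*q)) / (p*q*r) := by
    field_simp
  rw [hE, le_div_iff₀ (by positivity)]
  linarith


/-- Lemma 5 of the paper: one-step recursion for the momentum tracking
error of AdamW combined with SAM, stated for the `i`-th coordinate. With
`M' = β₁ M + (1-β₁) G`, `X'_i = X_i - η (M + λ X_i √(V+ε)) / √(V+ε)` a.s., and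
`E[(G - ∂ᵢf(X'))²] ≤ 4σ² + 12ρ²L²`, we get
`E[(M' - ∂ᵢf(X'))²] ≤ √β₁ E[(M - ∂ᵢf(X))²]
  + (β₁^{3/4} η² L² / ((1-β₁^{1/4})√ε)) E[(M + λ Xᵢ √(V+ε))² / √(V+ε)]
  + θ (1-β₁)² (4σ² + 12ρ²L²)` where `θ = ⌈1/(1-β₁^{5/4})⌉`. -/
theorem momentum_error_recursion
    {Ω : Type*} [MeasurableSpace Ω] (μ : Measure Ω) [IsProbabilityMeasure μ]
    (d : ℕ) (hd : 1 ≤ d)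
    (f : EuclideanSpace ℝ (Fin d) → ℝ) (L : ℝ) (hL : 0 ≤ L)
    (hdiff : Differentiable ℝ f)
    (hsmooth : ∀ (j : Fin d) (x y : EuclideanSpace ℝ (Fin d)),
      |fderiv ℝ f x (EuclideanSpace.single j 1) - fderiv ℝ f y (EuclideanSpace.single j 1)|
        ≤ L * |x j - y j|)
    (i : Fin d)
    (η lam ε β₁ σ ρ : ℝ) (hη : 0 < η) (hlam : 0 ≤ lam) (hε : 0 < ε)
    (hβ₁ : 0 < β₁) (hβ₁' : β₁ < 1) (hσ : 0 ≤ σ) (hρ : 0 ≤ ρ)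
    (X X' : Ω → EuclideanSpace ℝ (Fin d)) (M G V : Ω → ℝ)
    (hV : ∀ᵐ ω ∂μ, 0 ≤ V ω)
    (hstep : ∀ᵐ ω ∂μ,
      X' ω i = X ω i - η * (M ω + lam * X ω i * Real.sqrt (V ω + ε)) / Real.sqrt (V ω + ε))
    (hint1 : Integrable (fun ω =>
      (β₁ * M ω + (1 - β₁) * G ω - fderiv ℝ f (X' ω) (EuclideanSpace.single i 1)) ^ 2) μ)
    (hint2 : Integrable (fun ω =>
      (M ω - fderiv ℝ f (X ω) (EuclideanSpace.single i 1)) ^ 2) μ)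
    (hint3 : Integrable (fun ω =>
      (M ω + lam * X ω i * Real.sqrt (V ω + ε)) ^ 2 / Real.sqrt (V ω + ε)) μ)
    (hint4 : Integrable (fun ω =>
      (G ω - fderiv ℝ f (X' ω) (EuclideanSpace.single i 1)) ^ 2) μ)
    (hG : ∫ ω, (G ω - fderiv ℝ f (X' ω) (EuclideanSpace.single i 1)) ^ 2 ∂μ
      ≤ 4 * σ ^ 2 + 12 * ρ ^ 2 * L ^ 2) :
    ∫ ω, (β₁ * M ω + (1 - β₁) * G ω - fderiv ℝ f (X' ω) (EuclideanSpace.single i 1)) ^ 2 ∂μ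
      ≤ Real.sqrt β₁ * ∫ ω, (M ω - fderiv ℝ f (X ω) (EuclideanSpace.single i 1)) ^ 2 ∂μ
        + (β₁ ^ ((3 : ℝ) / 4) * η ^ 2 * L ^ 2 / ((1 - β₁ ^ ((1 : ℝ) / 4)) * Real.sqrt ε))
            * ∫ ω, (M ω + lam * X ω i * Real.sqrt (V ω + ε)) ^ 2 / Real.sqrt (V ω + ε) ∂μ
        + (⌈(1 - β₁ ^ ((5 : ℝ) / 4))⁻¹⌉₊ : ℝ) * (1 - β₁) ^ 2
            * (4 * σ ^ 2 + 12 * ρ ^ 2 * L ^ 2) := by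
  set t : ℝ := β₁ ^ ((1:ℝ)/4) with ht_def
  have ht : 0 < t := Real.rpow_pos_of_pos hβ₁ _
  have ht1 : t < 1 := Real.rpow_lt_one hβ₁.le hβ₁' (by norm_num)
  have htβ : t ^ (4:ℕ) = β₁ := by
    rw [ht_def, ← Real.rpow_natCast (β₁ ^ ((1:ℝ)/4)) 4, ← Real.rpow_mul hβ₁.le]
    norm_num
  have hsqβ : Real.sqrt β₁ = t ^ 2 := by
    rw [← htβ, show t^(4:ℕ) = (t^2)^2 by ring, Real.sqrt_sq (by positivity)]
  have h54 : β₁ ^ ((5:ℝ)/4) = t ^ 5 := by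
    rw [ht_def, ← Real.rpow_natCast (β₁ ^ ((1:ℝ)/4)) 5, ← Real.rpow_mul hβ₁.le]
    norm_num
  have h34 : β₁ ^ ((3:ℝ)/4) = t ^ 3 := by
    rw [ht_def, ← Real.rpow_natCast (β₁ ^ ((1:ℝ)/4)) 3, ← Real.rpow_mul hβ₁.le]
    norm_num
  have ht5 : t ^ 5 < 1 := pow_lt_one₀ ht.le ht1 (by norm_num)
  set D : Ω → ℝ := fun ω => fderiv ℝ f (X ω) (EuclideanSpace.single i 1) with hD
  set D' : Ω → ℝ := fun ω => fderiv ℝ f (X' ω) (EuclideanSpace.single i 1) with hD'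
  set S : Ω → ℝ := fun ω => Real.sqrt (V ω + ε) with hS
  set A : Ω → ℝ := fun ω => M ω + lam * X ω i * S ω with hA
  set C2 : ℝ := t ^ 3 * η ^ 2 * L ^ 2 / ((1 - t) * Real.sqrt ε) with hC2
  set C3 : ℝ := (1 - β₁) ^ 2 / (1 - t ^ 5) with hC3
  have hpt : ∀ᵐ ω ∂μ,
      (β₁ * M ω + (1 - β₁) * G ω - D' ω) ^ 2
        ≤ t ^ 2 * (M ω - D ω) ^ 2 + C2 * (A ω ^ 2 / S ω) + C3 * (G ω - D' ω) ^ 2 := by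
    filter_upwards [hV, hstep] with ω hVω hstepω
    have hSpos : 0 < S ω := Real.sqrt_pos.2 (by linarith)
    have hSe : Real.sqrt ε ≤ S ω := Real.sqrt_le_sqrt (by linarith)
    have hεpos : 0 < Real.sqrt ε := Real.sqrt_pos.2 hε
    have hx : X' ω i - X ω i = -(η * A ω / S ω) := by rw [hstepω]; ring
    have hx2 : (X' ω i - X ω i) ^ 2 = η ^ 2 * A ω ^ 2 / S ω ^ 2 := by
      rw [hx, neg_sq, div_pow, mul_pow]
    have hsm := hsmooth i (X' ω) (X ω)
    have hd2 : (D' ω - D ω) ^ 2 ≤ L ^ 2 * (η ^ 2 * A ω ^ 2 / S ω ^ 2) := by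
      calc (D' ω - D ω) ^ 2 = |D' ω - D ω| ^ 2 := (sq_abs _).symm
        _ ≤ (L * |X' ω i - X ω i|) ^ 2 := by
            apply pow_le_pow_left₀ (abs_nonneg _) hsm
        _ = L ^ 2 * (X' ω i - X ω i) ^ 2 := by rw [mul_pow, sq_abs]
        _ = L ^ 2 * (η ^ 2 * A ω ^ 2 / S ω ^ 2) := by rw [hx2]
    have hfrac : A ω ^ 2 / S ω ^ 2 ≤ (A ω ^ 2 / S ω) / Real.sqrt ε := by
      rw [div_div]
      apply div_le_div_of_nonneg_left (sq_nonneg _) (by positivity)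
      calc S ω * Real.sqrt ε ≤ S ω * S ω :=
            mul_le_mul_of_nonneg_left hSe hSpos.le
        _ = S ω ^ 2 := by ring
    have hd2' : (D' ω - D ω) ^ 2 ≤ L ^ 2 * η ^ 2 * ((A ω ^ 2 / S ω) / Real.sqrt ε) := by
      calc (D' ω - D ω) ^ 2 ≤ L ^ 2 * (η ^ 2 * A ω ^ 2 / S ω ^ 2) := hd2
        _ = L ^ 2 * η ^ 2 * (A ω ^ 2 / S ω ^ 2) := by ring
        _ ≤ L ^ 2 * η ^ 2 * ((A ω ^ 2 / S ω) / Real.sqrt ε) :=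
            mul_le_mul_of_nonneg_left hfrac (by positivity)
    have hdecomp : β₁ * M ω + (1 - β₁) * G ω - D' ω
        = β₁ * (M ω - D ω) + β₁ * (D ω - D' ω) + (1 - β₁) * (G ω - D' ω) := by ring
    have hp : 0 < t ^ 6 := by positivity
    have hq : 0 < t ^ 5 * (1 - t) := mul_pos (by positivity) (by linarith)
    have hr : 0 < 1 - t ^ 5 := by linarith
    have hsum : t ^ 6 + t ^ 5 * (1 - t) + (1 - t ^ 5) = 1 := by ring
    have H := three_term (β₁ * (M ω - D ω)) (β₁ * (D ω - D' ω)) ((1 - β₁) * (G ω - D' ω))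
      (t ^ 6) (t ^ 5 * (1 - t)) (1 - t ^ 5) hp hq hr hsum
    rw [← hdecomp] at H
    have hβt : β₁ = t ^ 4 := htβ.symm
    have e1 : (β₁ * (M ω - D ω)) ^ 2 / t ^ 6 = t ^ 2 * (M ω - D ω) ^ 2 := by
      rw [hβt]; field_simp
    have e2 : (β₁ * (D ω - D' ω)) ^ 2 / (t ^ 5 * (1 - t)) ≤ C2 * (A ω ^ 2 / S ω) := by
      have h1 : (β₁ * (D ω - D' ω)) ^ 2 = t ^ 8 * (D' ω - D ω) ^ 2 := by
        rw [hβt]; ring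
      have h2 : t ^ 8 * (D' ω - D ω) ^ 2
          ≤ t ^ 8 * (L ^ 2 * η ^ 2 * ((A ω ^ 2 / S ω) / Real.sqrt ε)) :=
        mul_le_mul_of_nonneg_left hd2' (by positivity)
      calc (β₁ * (D ω - D' ω)) ^ 2 / (t ^ 5 * (1 - t))
          = t ^ 8 * (D' ω - D ω) ^ 2 / (t ^ 5 * (1 - t)) := by rw [h1]
        _ ≤ t ^ 8 * (L ^ 2 * η ^ 2 * ((A ω ^ 2 / S ω) / Real.sqrt ε)) / (t ^ 5 * (1 - t)) :=
            by gcongr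
        _ = C2 * (A ω ^ 2 / S ω) := by
            have h3 : t ≠ 0 := ht.ne'
            have h4 : (1 - t) ≠ 0 := by linarith
            have h5 : Real.sqrt ε ≠ 0 := hεpos.ne'
            have h6 : S ω ≠ 0 := hSpos.ne'
            rw [hC2]
            field_simp
    have e3 : ((1 - β₁) * (G ω - D' ω)) ^ 2 / (1 - t ^ 5) = C3 * (G ω - D' ω) ^ 2 := by
      rw [hC3]; field_simp
    rw [e1, e3] at H
    linarith
  have hbound_int : Integrable (fun ω =>
      t ^ 2 * (M ω - D ω) ^ 2 + C2 * (A ω ^ 2 / S ω) + C3 * (G ω - D' ω) ^ 2) μ :=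
    ((hint2.const_mul _).add (hint3.const_mul _)).add (hint4.const_mul _)
  have hf1 : Integrable (fun ω => t ^ 2 * (M ω - D ω) ^ 2) μ := hint2.const_mul _
  have hf3 : Integrable (fun ω => C2 * (A ω ^ 2 / S ω)) μ := hint3.const_mul _
  have hf4 : Integrable (fun ω => C3 * (G ω - D' ω) ^ 2) μ := hint4.const_mul _
  have hf13 : Integrable (fun ω => t ^ 2 * (M ω - D ω) ^ 2 + C2 * (A ω ^ 2 / S ω)) μ :=
    hf1.add hf3
  have hmono := integral_mono_ae hint1 hbound_int hpt
  rw [integral_add hf13 hf4, integral_add hf1 hf3,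
    integral_const_mul, integral_const_mul, integral_const_mul] at hmono
  have hI4 : 0 ≤ ∫ ω, (G ω - D' ω) ^ 2 ∂μ := integral_nonneg fun ω => sq_nonneg _
  have hB : (0:ℝ) ≤ 4 * σ ^ 2 + 12 * ρ ^ 2 * L ^ 2 := by positivity
  have hceil : (1 - t ^ 5)⁻¹ ≤ (⌈(1 - β₁ ^ ((5:ℝ)/4))⁻¹⌉₊ : ℝ) := by
    rw [h54]; exact Nat.le_ceil _
  have hr : 0 < 1 - t ^ 5 := by linarith
  have hkey : C3 * ∫ ω, (G ω - D' ω) ^ 2 ∂μ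
      ≤ (⌈(1 - β₁ ^ ((5:ℝ)/4))⁻¹⌉₊ : ℝ) * (1 - β₁) ^ 2 * (4 * σ ^ 2 + 12 * ρ ^ 2 * L ^ 2) := by
    rw [hC3, div_eq_mul_inv]
    have h1 : (1 - t ^ 5)⁻¹ * ∫ ω, (G ω - D' ω) ^ 2 ∂μ
        ≤ (1 - t ^ 5)⁻¹ * (4 * σ ^ 2 + 12 * ρ ^ 2 * L ^ 2) :=
      mul_le_mul_of_nonneg_left hG (by positivity)
    have h2 : (1 - t ^ 5)⁻¹ * (4 * σ ^ 2 + 12 * ρ ^ 2 * L ^ 2)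
        ≤ (⌈(1 - β₁ ^ ((5:ℝ)/4))⁻¹⌉₊ : ℝ) * (4 * σ ^ 2 + 12 * ρ ^ 2 * L ^ 2) :=
      mul_le_mul_of_nonneg_right hceil hB
    calc (1 - β₁) ^ 2 * (1 - t ^ 5)⁻¹ * ∫ ω, (G ω - D' ω) ^ 2 ∂μ
        = (1 - β₁) ^ 2 * ((1 - t ^ 5)⁻¹ * ∫ ω, (G ω - D' ω) ^ 2 ∂μ) := by ring
      _ ≤ (1 - β₁) ^ 2 * ((⌈(1 - β₁ ^ ((5:ℝ)/4))⁻¹⌉₊ : ℝ) * (4 * σ ^ 2 + 12 * ρ ^ 2 * L ^ 2)) :=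
          mul_le_mul_of_nonneg_left (h1.trans h2) (sq_nonneg _)
      _ = (⌈(1 - β₁ ^ ((5:ℝ)/4))⁻¹⌉₊ : ℝ) * (1 - β₁) ^ 2 * (4 * σ ^ 2 + 12 * ρ ^ 2 * L ^ 2) := by
          ring
  rw [hsqβ, h34]
  calc ∫ ω, (β₁ * M ω + (1 - β₁) * G ω - D' ω) ^ 2 ∂μ
      ≤ t ^ 2 * (∫ ω, (M ω - D ω) ^ 2 ∂μ) + C2 * (∫ ω, A ω ^ 2 / S ω ∂μ)
        + C3 * ∫ ω, (G ω - D' ω) ^ 2 ∂μ := hmono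
    _ ≤ _ := by rw [hC2]; linarith
end

section
/- Let T ≥ 1 be an integer, d ≥ 1, η > 0, λ > 0, ε > 0, and ν > 0 with √ν / T^{1/4} < 1. Let x_1, …, x_T ∈ ℝᵈ and, for each t ∈ {1, …, T−1} and each coordinate i ∈ {1, …, d}, let m_{t,i} ∈ ℝ and v_{t,i} ≥ 0 satisfy m_{t,i}² ≤ 8·(v_{t,i} + ε), and suppose that either x_{t+1,i} = x_{t,i} (the coordinate is frozen) or x_{t+1,i} = x_{t,i} − η·m_{t,i}/√(v_{t,i} + ε) − η·λ·x_{t,i} (the coordinate is updated). If η·λ ≤ √ν/(5·T^{5/4}) and λ·‖x_1‖_∞ ≤ √ν/(4·T^{1/4}), then λ·‖x_t‖_∞ ≤ √ν/T^{1/4} for every t ∈ {1, …, T}. -/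
set_option maxHeartbeats 1000000


/-- Lemma 2 of the paper (iterate boundedness for sparse AdamW).
Here `x t : Fin d → ℝ` and `‖x t‖` is the sup norm (the norm on the Pi type `Fin d → ℝ`).
At each step `t ∈ {1, …, T-1}` every coordinate is either frozen or updated by the AdamW
rule with learning rate `η`, weight decay `λ`, momentum `m`, second moment `v`, and
stabilization constant `ε`, and `m_{t,i}² ≤ 8 (v_{t,i} + ε)`. Under the step-size and
initialization conditions, `λ ‖x t‖_∞ ≤ √ν / T^{1/4}` for all `t ∈ {1, …, T}`. -/
theorem sparse_adamw_iterate_bound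
    (T : ℕ) (hT : 1 ≤ T) (d : ℕ) (hd : 1 ≤ d)
    (η lam ε ν : ℝ) (hη : 0 < η) (hlam : 0 < lam) (hε : 0 < ε) (hν : 0 < ν)
    (hν' : Real.sqrt ν / (T : ℝ) ^ ((1 : ℝ) / 4) < 1)
    (x : ℕ → Fin d → ℝ) (m v : ℕ → Fin d → ℝ)
    (hv : ∀ t ∈ Finset.Icc 1 (T - 1), ∀ i, 0 ≤ v t i)
    (hm : ∀ t ∈ Finset.Icc 1 (T - 1), ∀ i, (m t i) ^ 2 ≤ 8 * (v t i + ε))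
    (hstep : ∀ t ∈ Finset.Icc 1 (T - 1), ∀ i,
      x (t + 1) i = x t i ∨
      x (t + 1) i = x t i - η * m t i / Real.sqrt (v t i + ε) - η * lam * x t i)
    (hηlam : η * lam ≤ Real.sqrt ν / (5 * (T : ℝ) ^ ((5 : ℝ) / 4)))
    (hx1 : lam * ‖x 1‖ ≤ Real.sqrt ν / (4 * (T : ℝ) ^ ((1 : ℝ) / 4))) :
    ∀ t ∈ Finset.Icc 1 T, lam * ‖x t‖ ≤ Real.sqrt ν / (T : ℝ) ^ ((1 : ℝ) / 4) := by
  have hT1 : (1 : ℝ) ≤ (T : ℝ) := by exact_mod_cast hT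
  have hTpos : (0 : ℝ) < (T : ℝ) := by linarith
  set A : ℝ := (T : ℝ) ^ ((1 : ℝ) / 4) with hAdef
  have hA1 : (1 : ℝ) ≤ A := Real.one_le_rpow hT1 (by norm_num)
  have hApos : (0 : ℝ) < A := by linarith
  set s : ℝ := Real.sqrt ν with hsdef
  have hs : 0 < s := Real.sqrt_pos.2 hν
  have hBeq : (T : ℝ) ^ ((5 : ℝ) / 4) = (T : ℝ) * A := by
    rw [hAdef, show (5 : ℝ) / 4 = 1 + 1 / 4 by norm_num, Real.rpow_add hTpos,
      Real.rpow_one]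
  -- s < A
  have hsA : s < A := by
    have := (div_lt_one hApos).mp hν'
    exact this
  -- η * lam ≤ 1
  have hηlam' : η * lam ≤ s / (5 * ((T : ℝ) * A)) := by rwa [hBeq] at hηlam
  have hηlam1 : η * lam ≤ 1 := by
    have h1 : s / (5 * ((T : ℝ) * A)) ≤ A / (5 * ((T : ℝ) * A)) := by
      exact div_le_div_of_nonneg_right hsA.le (by positivity)
    have h2 : A / (5 * ((T : ℝ) * A)) ≤ 1 := by
      rw [div_le_one (by positivity)]
      nlinarith
    linarith
  -- per-step norm bound
  have hstepnorm : ∀ t ∈ Finset.Icc 1 (T - 1), ‖x (t + 1)‖ ≤ ‖x t‖ + 3 * η := by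
    intro t ht
    have hnn : (0 : ℝ) ≤ ‖x t‖ + 3 * η := by positivity
    rw [pi_norm_le_iff_of_nonneg hnn]
    intro i
    have hcoord : ‖x (t + 1) i‖ ≤ ‖x t i‖ + 3 * η := by
      rcases hstep t ht i with h | h
      · rw [h]; nlinarith [norm_nonneg (x t i)]
      · have hvi := hv t ht i
        have hmi := hm t ht i
        set w : ℝ := Real.sqrt (v t i + ε) with hwdef
        have hw : 0 < w := Real.sqrt_pos.2 (by linarith)
        have hmabs : |m t i| ≤ 3 * w := by
          have h9 : (m t i) ^ 2 ≤ 9 * (v t i + ε) := by linarith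
          have : |m t i| = Real.sqrt ((m t i) ^ 2) := (Real.sqrt_sq_eq_abs _).symm
          rw [this]
          have h3w : (3 : ℝ) * w = Real.sqrt (9 * (v t i + ε)) := by
            rw [hwdef, show (9 : ℝ) * (v t i + ε) = 3 ^ 2 * (v t i + ε) by ring,
              Real.sqrt_mul (by positivity), Real.sqrt_sq (by norm_num)]
          rw [h3w]
          exact Real.sqrt_le_sqrt h9
        have hform : x (t + 1) i = (1 - η * lam) * x t i - η * m t i / w := by
          rw [h]; ring
        have h1 : |(1 - η * lam) * x t i| ≤ |x t i| := by
          rw [abs_mul]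
          have : |1 - η * lam| ≤ 1 := by
            rw [abs_le]; constructor <;> nlinarith
          nlinarith [abs_nonneg (x t i)]
        have h2 : |η * m t i / w| ≤ 3 * η := by
          rw [abs_div, abs_mul, abs_of_pos hη, abs_of_pos hw,
            div_le_iff₀ hw]
          nlinarith
        calc ‖x (t + 1) i‖ = |(1 - η * lam) * x t i - η * m t i / w| := by
              rw [Real.norm_eq_abs, hform]
          _ ≤ |(1 - η * lam) * x t i| + |η * m t i / w| := abs_sub _ _
          _ ≤ |x t i| + 3 * η := by linarith
          _ = ‖x t i‖ + 3 * η := by rw [Real.norm_eq_abs]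
    calc ‖x (t + 1) i‖ ≤ ‖x t i‖ + 3 * η := hcoord
      _ ≤ ‖x t‖ + 3 * η := by linarith [norm_le_pi_norm (x t) i]
  -- inductive bound
  have hind : ∀ t, 1 ≤ t → t ≤ T → lam * ‖x t‖ ≤ lam * ‖x 1‖ + 3 * ((t : ℝ) - 1) * η * lam := by
    intro t ht1
    induction t, ht1 using Nat.le_induction with
    | base => intro _; simp
    | succ n hn ih =>
      intro hnT
      have hn' : n ≤ T := by omega
      have hIH := ih hn'
      have hmem : n ∈ Finset.Icc 1 (T - 1) := by
        rw [Finset.mem_Icc]; omega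
      have := hstepnorm n hmem
      have hcast : ((n + 1 : ℕ) : ℝ) = (n : ℝ) + 1 := by push_cast; ring
      rw [hcast]
      nlinarith
  intro t ht
  rw [Finset.mem_Icc] at ht
  have hbd := hind t ht.1 ht.2
  have htT : ((t : ℝ) - 1) ≤ (T : ℝ) := by
    have : (t : ℝ) ≤ (T : ℝ) := by exact_mod_cast ht.2
    linarith
  have hstepsum : 3 * ((t : ℝ) - 1) * η * lam ≤ 3 * (T : ℝ) * (s / (5 * ((T : ℝ) * A))) := by
    have h0 : (0 : ℝ) ≤ (t : ℝ) - 1 := by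
      have : (1 : ℝ) ≤ (t : ℝ) := by exact_mod_cast ht.1
      linarith
    have h1 : ((t : ℝ) - 1) * (η * lam) ≤ (T : ℝ) * (s / (5 * ((T : ℝ) * A))) := by
      apply mul_le_mul htT hηlam' (by positivity) (by positivity)
    nlinarith
  have hfinal : 3 * (T : ℝ) * (s / (5 * ((T : ℝ) * A))) = (3 / 5) * (s / A) := by
    field_simp
  have hx1' : lam * ‖x 1‖ ≤ (1 / 4) * (s / A) := by
    have : s / (4 * A) = (1 / 4) * (s / A) := by ring
    rw [← this]; exact hx1
  have : lam * ‖x t‖ ≤ (1 / 4) * (s / A) + (3 / 5) * (s / A) := by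
    rw [← hfinal]; linarith
  have hq : 0 < s / A := by positivity
  linarith
end

section
/- Let a, m, x̄ ∈ ℝ, v ≥ 0, ε > 0, L > 0, λ ≥ 0, and 0 < η ≤ √ε/(2L). Write D = √(v + ε) and u = m + λ·x̄·D. Then −η·a·u/D + (η²L/2)·u²/D² ≤ −(η/2)·a²/D − (η/4)·u²/D + η·(a − m)²/√ε + η·λ²·x̄²·D. -/
/-- Per-coordinate algebraic inequality from the proof of Theorem 1:
with `D = √(v+ε)` and `u = m + λ x̄ D`, if `0 < η ≤ √ε/(2L)` then
`-η a u / D + (η² L / 2) u² / D² ≤ -(η/2) a²/D - (η/4) u²/D + η (a-m)²/√ε + η λ² x̄² D`. -/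
theorem adamw_per_coordinate_descent_inequality
    (a m xbar v ε L lam η : ℝ)
    (hv : 0 ≤ v) (hε : 0 < ε) (hL : 0 < L) (hlam : 0 ≤ lam)
    (hη : 0 < η) (hη' : η ≤ Real.sqrt ε / (2 * L)) :
    -η * a * (m + lam * xbar * Real.sqrt (v + ε)) / Real.sqrt (v + ε)
        + η ^ 2 * L / 2 * (m + lam * xbar * Real.sqrt (v + ε)) ^ 2 / Real.sqrt (v + ε) ^ 2
      ≤ -(η / 2) * a ^ 2 / Real.sqrt (v + ε)
          - η / 4 * (m + lam * xbar * Real.sqrt (v + ε)) ^ 2 / Real.sqrt (v + ε)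
          + η * (a - m) ^ 2 / Real.sqrt ε
          + η * lam ^ 2 * xbar ^ 2 * Real.sqrt (v + ε) := by
  set s := Real.sqrt ε with hs
  set d := Real.sqrt (v + ε) with hd
  have hs0 : 0 < s := Real.sqrt_pos.mpr hε
  have hd0 : 0 < d := Real.sqrt_pos.mpr (by linarith)
  have hsd : s ≤ d := Real.sqrt_le_sqrt (by linarith)
  have hηL : η * L ≤ s / 2 := by
    rw [le_div_iff₀ (by positivity)] at hη'; nlinarith
  clear_value s d
  rw [← sub_nonneg]
  have key : 0 ≤ (-(η / 2) * a ^ 2 * d * s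
      - η / 4 * (m + lam * xbar * d) ^ 2 * d * s
      + η * (a - m) ^ 2 * d ^ 2 + η * lam ^ 2 * xbar ^ 2 * d ^ 3 * s
      + η * a * (m + lam * xbar * d) * d * s
      - η ^ 2 * L / 2 * (m + lam * xbar * d) ^ 2 * s) := by
    have hA : η ^ 2 * L / 2 * (m + lam * xbar * d) ^ 2 * s
        ≤ η / 4 * (m + lam * xbar * d) ^ 2 * d * s := by
      nlinarith [mul_nonneg (mul_nonneg (mul_nonneg hη.le
          (sq_nonneg (m + lam * xbar * d))) hs0.le)
          (by linarith : (0:ℝ) ≤ s / 2 - η * L),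
        mul_nonneg (mul_nonneg (mul_nonneg hη.le
          (sq_nonneg (m + lam * xbar * d))) hs0.le) (sub_nonneg.mpr hsd)]
    have hB : 0 ≤ -(η / 2) * a ^ 2 * d * s
        - η / 2 * (m + lam * xbar * d) ^ 2 * d * s
        + η * (a - m) ^ 2 * d ^ 2 + η * lam ^ 2 * xbar ^ 2 * d ^ 3 * s
        + η * a * (m + lam * xbar * d) * d * s := by
      nlinarith [mul_nonneg (mul_nonneg (mul_nonneg hη.le hd0.le) hs0.le)
          (sq_nonneg (a - m + lam * xbar * d)),
        mul_nonneg (mul_nonneg hη.le (sq_nonneg (a - m)))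
          (mul_nonneg hd0.le (sub_nonneg.mpr hsd))]
    linarith
  have heq : (-(η / 2) * a ^ 2 / d - η / 4 * (m + lam * xbar * d) ^ 2 / d
      + η * (a - m) ^ 2 / s + η * lam ^ 2 * xbar ^ 2 * d)
      - (-η * a * (m + lam * xbar * d) / d
        + η ^ 2 * L / 2 * (m + lam * xbar * d) ^ 2 / d ^ 2)
      = (-(η / 2) * a ^ 2 * d * s
      - η / 4 * (m + lam * xbar * d) ^ 2 * d * s
      + η * (a - m) ^ 2 * d ^ 2 + η * lam ^ 2 * xbar ^ 2 * d ^ 3 * s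
      + η * a * (m + lam * xbar * d) * d * s
      - η ^ 2 * L / 2 * (m + lam * xbar * d) ^ 2 * s) / (d ^ 2 * s) := by
    field_simp
    ring
  rw [heq]
  positivity
end

section
/- Let d ≥ 1 and let f : ℝᵈ → ℝ be differentiable and coordinate-wise L-smooth for some L > 0. Let x, m ∈ ℝᵈ, let v ∈ ℝᵈ with v_i ≥ 0 for all i, let ε > 0, λ ≥ 0, c ≥ 0 with λ·|x_i| ≤ c for every coordinate i, and let 0 < η ≤ √ε/(2L). Let (Ω, μ) be a probability space and S : Ω → (subsets of {1,…,d}) a random subset such that μ({ω : i ∈ S(ω)}) = p_i with p_min ≤ p_i ≤ 1 for all i, where p_min > 0. Define the random vector x⁺ by x⁺_i = x_i − η·(m_i + λ·x_i·√(v_i + ε))/√(v_i + ε) for i ∈ S(ω) and x⁺_i = x_i otherwise. Then E[f(x⁺)] ≤ f(x) − (η·p_min/2)·∑_{i=1}^d (∂_i f(x))²/√(v_i + ε) − (η·p_min/4)·∑_{i=1}^d (m_i + λ·x_i·√(v_i + ε))²/√(v_i + ε) + (η/√ε)·∑_{i=1}^d (∂_i f(x) − m_i)² + η·c²·∑_{i=1}^d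 √(v_i + ε). -/
set_option maxHeartbeats 1000000


open MeasureTheory

lemma descent_lemma {d : ℕ} (f : (Fin d → ℝ) → ℝ) (L : ℝ) (hL : 0 < L)
    (hdiff : Differentiable ℝ f)
    (hsmooth : ∀ (i : Fin d) (x y : Fin d → ℝ),
      |fderiv ℝ f x (Pi.single i 1) - fderiv ℝ f y (Pi.single i 1)| ≤ L * |x i - y i|)
    (x y : Fin d → ℝ) :
    f y ≤ f x + (∑ i, fderiv ℝ f x (Pi.single i 1) * (y i - x i))
      + L / 2 * ∑ i, (y i - x i) ^ 2 := by
  set w : Fin d → ℝ := fun i => y i - x i with hw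
  have hline : ∀ t : ℝ, HasDerivAt (fun t : ℝ => f (x + t • w))
      (fderiv ℝ f (x + t • w) w) t := by
    intro t
    have h1 : HasDerivAt (fun t : ℝ => x + t • w) w t := by
      simpa using ((hasDerivAt_id t).smul_const w).const_add x
    exact ((hdiff (x + t • w)).hasFDerivAt.comp_hasDerivAt t h1)
  have hfd : ∀ z : Fin d → ℝ,
      fderiv ℝ f z w = ∑ i, w i * fderiv ℝ f z (Pi.single i 1) := by
    intro z
    have hwrep : (∑ i, w i • (Pi.single i 1 : Fin d → ℝ)) = w := by
      ext j
      simp [Pi.single_apply, Finset.sum_apply]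
    calc fderiv ℝ f z w = fderiv ℝ f z (∑ i, w i • (Pi.single i 1 : Fin d → ℝ)) := by rw [hwrep]
      _ = ∑ i, w i * fderiv ℝ f z (Pi.single i 1) := by
          rw [map_sum]
          simp [smul_eq_mul]
  set Q : ℝ := ∑ i, w i ^ 2 with hQ
  have hQ0 : 0 ≤ Q := Finset.sum_nonneg fun i _ => sq_nonneg _
  have hlip : ∀ s t : ℝ,
      |fderiv ℝ f (x + t • w) w - fderiv ℝ f (x + s • w) w| ≤ L * Q * |t - s| := by
    intro s t
    rw [hfd, hfd, ← Finset.sum_sub_distrib]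
    calc |∑ i, (w i * fderiv ℝ f (x + t • w) (Pi.single i 1)
            - w i * fderiv ℝ f (x + s • w) (Pi.single i 1))|
        ≤ ∑ i, |w i * fderiv ℝ f (x + t • w) (Pi.single i 1)
            - w i * fderiv ℝ f (x + s • w) (Pi.single i 1)| :=
          Finset.abs_sum_le_sum_abs _ _
      _ ≤ ∑ i, L * w i ^ 2 * |t - s| := by
          apply Finset.sum_le_sum
          intro i _
          rw [← mul_sub, abs_mul]
          have h2 := hsmooth i (x + t • w) (x + s • w)
          have h3 : (x + t • w) i - (x + s • w) i = (t - s) * w i := by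
            simp [Pi.add_apply, Pi.smul_apply]
            ring
          rw [h3] at h2
          calc |w i| * |fderiv ℝ f (x + t • w) (Pi.single i 1)
                - fderiv ℝ f (x + s • w) (Pi.single i 1)|
              ≤ |w i| * (L * |(t - s) * w i|) :=
                mul_le_mul_of_nonneg_left h2 (abs_nonneg _)
            _ = L * w i ^ 2 * |t - s| := by
                rw [abs_mul]
                rw [show |w i| * (L * (|t - s| * |w i|)) = L * (|w i| * |w i|) * |t - s| by ring]
                rw [abs_mul_abs_self, ← sq]
      _ = L * Q * |t - s| := by rw [← Finset.sum_mul, ← Finset.mul_sum]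
  have hcont : Continuous (fun t : ℝ => fderiv ℝ f (x + t • w) w) := by
    apply LipschitzWith.continuous (K := (L * Q).toNNReal)
    apply LipschitzWith.of_dist_le_mul
    intro t s
    rw [Real.dist_eq, Real.dist_eq]
    calc |fderiv ℝ f (x + t • w) w - fderiv ℝ f (x + s • w) w| ≤ L * Q * |t - s| := hlip s t
      _ ≤ (L * Q).toNNReal * |t - s| := by
          apply mul_le_mul_of_nonneg_right _ (abs_nonneg _)
          exact Real.le_coe_toNNReal _
  have hint : IntervalIntegrable (fun t : ℝ => fderiv ℝ f (x + t • w) w)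
      MeasureTheory.volume 0 1 := hcont.intervalIntegrable 0 1
  have hFTC : ∫ t in (0:ℝ)..1, fderiv ℝ f (x + t • w) w = f y - f x := by
    have h0 : x + (0:ℝ) • w = x := by ext j; simp
    have h1 : x + (1:ℝ) • w = y := by ext j; simp [hw]
    have := intervalIntegral.integral_eq_sub_of_hasDerivAt
      (f := fun t : ℝ => f (x + t • w)) (fun t _ => hline t) hint
    have h1' : x + w = y := by ext j; simp [hw]
    rw [this]
    simp [h0, h1, h1']
  have hb : ∀ t ∈ Set.Icc (0:ℝ) 1,
      fderiv ℝ f (x + t • w) w ≤ fderiv ℝ f x w + L * Q * t := by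
    intro t ht
    have h2 := hlip 0 t
    have h3 : x + (0:ℝ) • w = x := by ext j; simp
    rw [h3] at h2
    rw [sub_zero, abs_of_nonneg ht.1] at h2
    have := abs_le.mp h2
    linarith [this.1, this.2]
  have hmono : ∫ t in (0:ℝ)..1, fderiv ℝ f (x + t • w) w
      ≤ ∫ t in (0:ℝ)..1, (fderiv ℝ f x w + L * Q * t) := by
    apply intervalIntegral.integral_mono_on (by norm_num) hint
    · exact (continuous_const.add (continuous_const.mul continuous_id)).intervalIntegrable 0 1
    · exact hb
  have hcomp : ∫ t in (0:ℝ)..1, (fderiv ℝ f x w + L * Q * t)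
      = fderiv ℝ f x w + L * Q / 2 := by
    rw [intervalIntegral.integral_add intervalIntegrable_const
      (show IntervalIntegrable (fun t : ℝ => L * Q * t) MeasureTheory.volume 0 1 from (by fun_prop : Continuous (fun t : ℝ => L * Q * t)).intervalIntegrable 0 1)]
    rw [intervalIntegral.integral_const, intervalIntegral.integral_const_mul]
    norm_num
    ring
  have hfd0 : fderiv ℝ f x w = ∑ i, fderiv ℝ f x (Pi.single i 1) * (y i - x i) := by
    rw [hfd x]
    apply Finset.sum_congr rfl
    intro i _
    rw [hw, mul_comm]
  have : f y - f x ≤ fderiv ℝ f x w + L * Q / 2 := by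
    rw [← hFTC]; rw [hcomp] at hmono; exact hmono
  rw [hfd0, hQ] at this
  have hQe : L * (∑ i, w i ^ 2) / 2 = L / 2 * ∑ i, (y i - x i) ^ 2 := by
    rw [hw]; ring
  linarith [this, hQe.le, hQe.ge]


lemma coord_bound (g mm lam xv c η L pmin pp s se : ℝ)
    (hsE : 0 < se) (hses : se ≤ s) (hη : 0 < η)
    (hLη : 2 * L * η ≤ se) (hpmin : 0 < pmin) (hp1 : pmin ≤ pp) (hp2 : pp ≤ 1)
    (hlam : 0 ≤ lam) (hc : 0 ≤ c) (hxc : lam * |xv| ≤ c) :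
    pp * (-(g * (η * (mm + lam * xv * s) / s)) + L / 2 * (η * (mm + lam * xv * s) / s) ^ 2)
      ≤ -(η * pmin / 2 * (g ^ 2 / s)) - η * pmin / 4 * ((mm + lam * xv * s) ^ 2 / s)
        + η / se * (g - mm) ^ 2 + η * c ^ 2 * s := by
  have hs : 0 < s := lt_of_lt_of_le hsE hses
  have hppos : 0 < pp := lt_of_lt_of_le hpmin hp1
  obtain ⟨h, hh⟩ : ∃ h : ℝ, h = mm + lam * xv * s := ⟨_, rfl⟩
  rw [← hh]
  have hηs : 0 < η / s := by positivity
  -- step 1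
  have step1 : -(g * (η * h / s)) + L / 2 * (η * h / s) ^ 2
      ≤ η / s * (-(g ^ 2 / 2)) + η / s * (-(h ^ 2 / 4)) + η / s * ((g - h) ^ 2 / 2) := by
    have e1 : -(g * (η * h / s)) = η / s * (-(g * h)) := by ring
    have e2 : L / 2 * (η * h / s) ^ 2 - η / s * (h ^ 2 / 4)
        = η * h ^ 2 * (2 * L * η - s) / (4 * s ^ 2) := by
      field_simp
      ring
    have e3 : η * h ^ 2 * (2 * L * η - s) / (4 * s ^ 2) ≤ 0 := by
      apply div_nonpos_of_nonpos_of_nonneg _ (by positivity)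
      exact mul_nonpos_of_nonneg_of_nonpos (by positivity) (by linarith)
    have e4 : η / s * (-(g * h)) + η / s * (h ^ 2 / 4)
        = η / s * (-(g ^ 2 / 2)) + η / s * (-(h ^ 2 / 4)) + η / s * ((g - h) ^ 2 / 2) := by
      ring
    linarith
  -- each piece after multiplying by pp
  have t1 : pp * (η / s * (-(g ^ 2 / 2))) ≤ pmin * (η / s * (-(g ^ 2 / 2))) := by
    apply mul_le_mul_of_nonpos_right hp1
    apply mul_nonpos_of_nonneg_of_nonpos hηs.le
    nlinarith [sq_nonneg g]
  have t2 : pp * (η / s * (-(h ^ 2 / 4))) ≤ pmin * (η / s * (-(h ^ 2 / 4))) := by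
    apply mul_le_mul_of_nonpos_right hp1
    apply mul_nonpos_of_nonneg_of_nonpos hηs.le
    nlinarith [sq_nonneg h]
  have t3 : pp * (η / s * ((g - h) ^ 2 / 2)) ≤ η / s * ((g - h) ^ 2 / 2) := by
    have hv : 0 ≤ η / s * ((g - h) ^ 2 / 2) := by positivity
    nlinarith
  -- step 4 : bound the cross term
  have hcx : (lam * xv) ^ 2 ≤ c ^ 2 := by
    have h1 : (lam * |xv|) ^ 2 ≤ c ^ 2 := by
      apply pow_le_pow_left₀ (by positivity) hxc
    calc (lam * xv) ^ 2 = (lam * |xv|) ^ 2 := by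
          rw [mul_pow, mul_pow, sq_abs]
      _ ≤ c ^ 2 := h1
  have t4 : η / s * ((g - h) ^ 2 / 2) ≤ η / se * (g - mm) ^ 2 + η * c ^ 2 * s := by
    have hgh : (g - h) ^ 2 ≤ 2 * (g - mm) ^ 2 + 2 * (lam * xv * s) ^ 2 := by
      rw [hh]
      nlinarith [sq_nonneg ((g - mm) + lam * xv * s)]
    have b1 : η / s * ((g - h) ^ 2 / 2) ≤ η / s * ((g - mm) ^ 2 + (lam * xv) ^ 2 * s ^ 2) := by
      refine mul_le_mul_of_nonneg_left ?_ hηs.le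
      nlinarith [hgh]
    have b2 : η / s * ((g - mm) ^ 2 + (lam * xv) ^ 2 * s ^ 2)
        = η * (g - mm) ^ 2 / s + η * (lam * xv) ^ 2 * s := by
      field_simp
    have b3 : η * (g - mm) ^ 2 / s ≤ η / se * (g - mm) ^ 2 := by
      rw [show η / se * (g - mm) ^ 2 = η * (g - mm) ^ 2 / se by ring]
      apply div_le_div_of_nonneg_left (by positivity) hsE hses
    have b4 : η * (lam * xv) ^ 2 * s ≤ η * c ^ 2 * s := by
      nlinarith [mul_le_mul_of_nonneg_left hcx (mul_pos hη hs).le]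
    linarith
  -- combine
  have main : pp * (-(g * (η * h / s)) + L / 2 * (η * h / s) ^ 2)
      ≤ pmin * (η / s * (-(g ^ 2 / 2))) + pmin * (η / s * (-(h ^ 2 / 4)))
        + (η / se * (g - mm) ^ 2 + η * c ^ 2 * s) := by
    have := mul_le_mul_of_nonneg_left step1 hppos.le
    nlinarith [t1, t2, t3, t4]
  have r1 : pmin * (η / s * (-(g ^ 2 / 2))) = -(η * pmin / 2 * (g ^ 2 / s)) := by ring
  have r2 : pmin * (η / s * (-(h ^ 2 / 4))) = -(η * pmin / 4 * (h ^ 2 / s)) := by ring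
  rw [r1, r2] at main
  linarith



/-- One-step expected descent inequality for a sparse AdamW step:
only a random subset `S ω` of coordinates is updated, coordinate `i` being active with
probability `p i ∈ [pmin, 1]`. Here `f : ℝᵈ → ℝ` is differentiable and coordinate-wise
`L`-smooth (`|∂ᵢf(x) - ∂ᵢf(y)| ≤ L |xᵢ - yᵢ|`), partial derivatives are
`fderiv ℝ f x (Pi.single i 1)`, `λ |xᵢ| ≤ c`, and `0 < η ≤ √ε/(2L)`. -/
theorem sparse_adamw_expected_descent
    {Ω : Type*} [MeasurableSpace Ω] (μ : Measure Ω) [IsProbabilityMeasure μ]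
    (d : ℕ) (hd : 1 ≤ d)
    (f : (Fin d → ℝ) → ℝ) (L : ℝ) (hL : 0 < L)
    (hdiff : Differentiable ℝ f)
    (hsmooth : ∀ (i : Fin d) (x y : Fin d → ℝ),
      |fderiv ℝ f x (Pi.single i 1) - fderiv ℝ f y (Pi.single i 1)| ≤ L * |x i - y i|)
    (x m v : Fin d → ℝ) (hv : ∀ i, 0 ≤ v i)
    (ε lam c η : ℝ) (hε : 0 < ε) (hlam : 0 ≤ lam) (hc : 0 ≤ c)
    (hxc : ∀ i, lam * |x i| ≤ c)
    (hη : 0 < η) (hη' : η ≤ Real.sqrt ε / (2 * L))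
    (S : Ω → Finset (Fin d)) (p : Fin d → ℝ) (pmin : ℝ) (hpmin : 0 < pmin)
    (hp : ∀ i, pmin ≤ p i ∧ p i ≤ 1)
    (hSmeas : ∀ i, MeasurableSet {ω | i ∈ S ω})
    (hSprob : ∀ i, μ {ω | i ∈ S ω} = ENNReal.ofReal (p i)) :
    ∫ ω, f (fun i => if i ∈ S ω then
        x i - η * (m i + lam * x i * Real.sqrt (v i + ε)) / Real.sqrt (v i + ε)
      else x i) ∂μ
      ≤ f x
        - η * pmin / 2 * ∑ i, (fderiv ℝ f x (Pi.single i 1)) ^ 2 / Real.sqrt (v i + ε)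
        - η * pmin / 4 *
            ∑ i, (m i + lam * x i * Real.sqrt (v i + ε)) ^ 2 / Real.sqrt (v i + ε)
        + η / Real.sqrt ε * ∑ i, (fderiv ℝ f x (Pi.single i 1) - m i) ^ 2
        + η * c ^ 2 * ∑ i, Real.sqrt (v i + ε) := by
  have hse0 : (0:ℝ) < Real.sqrt ε := Real.sqrt_pos.mpr hε
  have hσ0 : ∀ i : Fin d, (0:ℝ) < Real.sqrt (v i + ε) :=
    fun i => Real.sqrt_pos.mpr (by linarith [hv i])
  have hseσ : ∀ i : Fin d, Real.sqrt ε ≤ Real.sqrt (v i + ε) :=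
    fun i => Real.sqrt_le_sqrt (by linarith [hv i])
  have hLη : 2 * L * η ≤ Real.sqrt ε := by
    have h2L : (0:ℝ) < 2 * L := by positivity
    have := (le_div_iff₀ h2L).mp hη'
    linarith
  obtain ⟨g, hgdef⟩ : ∃ g : Fin d → ℝ, g = fun i => fderiv ℝ f x (Pi.single i 1) := ⟨_, rfl⟩
  obtain ⟨u, hudef⟩ : ∃ u : Fin d → ℝ, u = fun i =>
      η * (m i + lam * x i * Real.sqrt (v i + ε)) / Real.sqrt (v i + ε) := ⟨_, rfl⟩
  obtain ⟨a, hadef⟩ : ∃ a : Fin d → ℝ, a = fun i => -(g i * u i) + L / 2 * u i ^ 2 := ⟨_, rfl⟩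
  obtain ⟨bnd, hbdef⟩ : ∃ bnd : Fin d → ℝ, bnd = fun i =>
      -(η * pmin / 2 * (g i ^ 2 / Real.sqrt (v i + ε)))
      - η * pmin / 4 * ((m i + lam * x i * Real.sqrt (v i + ε)) ^ 2 / Real.sqrt (v i + ε))
      + η / Real.sqrt ε * (g i - m i) ^ 2 + η * c ^ 2 * Real.sqrt (v i + ε) := ⟨_, rfl⟩
  -- pointwise bound
  have hpt : ∀ ω, f (fun i => if i ∈ S ω then
        x i - η * (m i + lam * x i * Real.sqrt (v i + ε)) / Real.sqrt (v i + ε)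
      else x i)
      ≤ f x + ∑ i, Set.indicator {ω' | i ∈ S ω'} (fun _ => a i) ω := by
    intro ω
    have hdl := descent_lemma f L hL hdiff hsmooth x (fun i => if i ∈ S ω then
        x i - η * (m i + lam * x i * Real.sqrt (v i + ε)) / Real.sqrt (v i + ε) else x i)
    refine hdl.trans (le_of_eq ?_)
    rw [Finset.mul_sum, add_assoc, ← Finset.sum_add_distrib]
    congr 1
    apply Finset.sum_congr rfl
    intro i _
    by_cases hi : i ∈ S ω
    · simp only [hi, if_true, Set.indicator_apply, Set.mem_setOf_eq, hadef, hgdef, hudef]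
      ring
    · simp only [hi, if_false, Set.indicator_apply, Set.mem_setOf_eq]
      simp [hi]
  -- measurability and integrability
  have hYmeas : Measurable (fun ω => f (fun i => if i ∈ S ω then
        x i - η * (m i + lam * x i * Real.sqrt (v i + ε)) / Real.sqrt (v i + ε)
      else x i)) := by
    apply (hdiff.continuous.measurable).comp
    apply measurable_pi_lambda
    intro i
    exact Measurable.ite (hSmeas i) measurable_const measurable_const
  obtain ⟨F, hFdef⟩ : ∃ F : Finset (Fin d) → ℝ, F = fun t => |f (fun i => if i ∈ t then
        x i - η * (m i + lam * x i * Real.sqrt (v i + ε)) / Real.sqrt (v i + ε)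
      else x i)| := ⟨_, rfl⟩
  have hCne : (Finset.univ : Finset (Finset (Fin d))).Nonempty := Finset.univ_nonempty
  have hbdd : ∀ ω, ‖f (fun i => if i ∈ S ω then
        x i - η * (m i + lam * x i * Real.sqrt (v i + ε)) / Real.sqrt (v i + ε)
      else x i)‖ ≤ (Finset.univ : Finset (Finset (Fin d))).sup' hCne F := by
    intro ω
    rw [Real.norm_eq_abs]
    have := Finset.le_sup' (f := F) (b := S ω) (Finset.mem_univ (S ω))
    rw [hFdef] at this ⊢
    exact this
  have hInt2 : Integrable (fun ω => f x + ∑ i,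
      Set.indicator {ω' | i ∈ S ω'} (fun _ => a i) ω) μ :=
    (integrable_const _).add (integrable_finset_sum _ fun i _ =>
      (integrable_const (a i)).indicator (hSmeas i))
  have hInt1 : Integrable (fun ω => f (fun i => if i ∈ S ω then
        x i - η * (m i + lam * x i * Real.sqrt (v i + ε)) / Real.sqrt (v i + ε)
      else x i)) μ := by
    refine (integrable_const _).mono' hYmeas.aestronglyMeasurable
      (Filter.Eventually.of_forall hbdd)
  -- integral computation
  have hIeq : ∫ ω, (f x + ∑ i, Set.indicator {ω' | i ∈ S ω'} (fun _ => a i) ω) ∂μ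
      = f x + ∑ i, p i * a i := by
    rw [integral_add (integrable_const _) (integrable_finset_sum _ fun i _ =>
      (integrable_const (a i)).indicator (hSmeas i))]
    rw [integral_const]
    rw [integral_finset_sum _ (fun i _ => (integrable_const (a i)).indicator (hSmeas i))]
    congr 1
    · simp
    · apply Finset.sum_congr rfl
      intro i _
      rw [integral_indicator_const _ (hSmeas i), measureReal_def, hSprob i, smul_eq_mul,
        ENNReal.toReal_ofReal (le_of_lt (lt_of_lt_of_le hpmin (hp i).1))]
  -- per-coordinate bound
  have hsum : ∑ i, p i * a i ≤ ∑ i, bnd i := by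
    apply Finset.sum_le_sum
    intro i _
    rw [hadef, hudef, hbdef]
    simp only
    exact coord_bound (g i) (m i) lam (x i) c η L pmin (p i)
      (Real.sqrt (v i + ε)) (Real.sqrt ε) hse0 (hseσ i) hη hLη hpmin
      (hp i).1 (hp i).2 hlam hc (hxc i)
  -- rearrangement
  have e1 : η * pmin / 2 * ∑ i, (fderiv ℝ f x (Pi.single i 1)) ^ 2 / Real.sqrt (v i + ε)
      = ∑ i, η * pmin / 2 * (g i ^ 2 / Real.sqrt (v i + ε)) := by
    rw [Finset.mul_sum]; simp only [hgdef]
  have e2 : η * pmin / 4 * ∑ i, (m i + lam * x i * Real.sqrt (v i + ε)) ^ 2 / Real.sqrt (v i + ε)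
      = ∑ i, η * pmin / 4 * ((m i + lam * x i * Real.sqrt (v i + ε)) ^ 2 / Real.sqrt (v i + ε)) := by
    rw [Finset.mul_sum]
  have e3 : η / Real.sqrt ε * ∑ i, (fderiv ℝ f x (Pi.single i 1) - m i) ^ 2
      = ∑ i, η / Real.sqrt ε * (g i - m i) ^ 2 := by
    rw [Finset.mul_sum]; simp only [hgdef]
  have e4 : η * c ^ 2 * ∑ i, Real.sqrt (v i + ε)
      = ∑ i, η * c ^ 2 * Real.sqrt (v i + ε) := by
    rw [Finset.mul_sum]
  have hrearr : ∑ i, bnd i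
      = -(η * pmin / 2 * ∑ i, (fderiv ℝ f x (Pi.single i 1)) ^ 2 / Real.sqrt (v i + ε))
        - η * pmin / 4 * ∑ i, (m i + lam * x i * Real.sqrt (v i + ε)) ^ 2 / Real.sqrt (v i + ε)
        + η / Real.sqrt ε * ∑ i, (fderiv ℝ f x (Pi.single i 1) - m i) ^ 2
        + η * c ^ 2 * ∑ i, Real.sqrt (v i + ε) := by
    rw [e1, e2, e3, e4, hbdef]
    rw [← Finset.sum_neg_distrib, ← Finset.sum_sub_distrib, ← Finset.sum_add_distrib,
      ← Finset.sum_add_distrib]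
  calc ∫ ω, f (fun i => if i ∈ S ω then
        x i - η * (m i + lam * x i * Real.sqrt (v i + ε)) / Real.sqrt (v i + ε)
      else x i) ∂μ
      ≤ ∫ ω, (f x + ∑ i, Set.indicator {ω' | i ∈ S ω'} (fun _ => a i) ω) ∂μ :=
        integral_mono hInt1 hInt2 hpt
    _ = f x + ∑ i, p i * a i := hIeq
    _ ≤ f x + ∑ i, bnd i := by linarith [hsum]
    _ = _ := by rw [hrearr]; ring
end

section
/- Let E be a real inner product space, let A, B, C ∈ E, let β ∈ (0, 1), and set θ = ⌈1/(1 − β^{5/4})⌉. Then ‖β·(A − B) + (1 − β)·C‖² ≤ √β·‖A‖² + (β^{3/4}/(1 − β^{1/4}))·‖B‖² + θ·(1 − β)²·‖C‖². -/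
/-- Young-type inequality: `(a+b)² ≤ a²/t + b²/(1-t)` for `t ∈ (0,1)`. -/
lemma young_sq_aux {a b t : ℝ} (ht : 0 < t) (ht' : t < 1) :
    (a + b) ^ 2 ≤ a ^ 2 / t + b ^ 2 / (1 - t) := by
  have h1 : (0:ℝ) < 1 - t := by linarith
  rw [div_add_div _ _ (ne_of_gt ht) (ne_of_gt h1), le_div_iff₀ (by positivity)]
  nlinarith [sq_nonneg ((1 - t) * a - t * b)]

/-- The deterministic Young-inequality step from the proof of Lemma 5:
for vectors `A, B, C` in a real inner product space, `β ∈ (0,1)`, and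
`θ = ⌈1/(1 - β^{5/4})⌉`,
`‖β (A - B) + (1-β) C‖² ≤ √β ‖A‖² + (β^{3/4}/(1-β^{1/4})) ‖B‖² + θ (1-β)² ‖C‖²`. -/
theorem young_momentum_error_inequality
    {E : Type*} [NormedAddCommGroup E] [InnerProductSpace ℝ E]
    (A B C : E) (β : ℝ) (hβ : 0 < β) (hβ' : β < 1) :
    ‖β • (A - B) + (1 - β) • C‖ ^ 2
      ≤ Real.sqrt β * ‖A‖ ^ 2
        + β ^ ((3 : ℝ) / 4) / (1 - β ^ ((1 : ℝ) / 4)) * ‖B‖ ^ 2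
        + (⌈(1 - β ^ ((5 : ℝ) / 4))⁻¹⌉₊ : ℝ) * (1 - β) ^ 2 * ‖C‖ ^ 2 := by
  set u : ℝ := β ^ ((1 : ℝ) / 4) with hu_def
  have hu : 0 < u := Real.rpow_pos_of_pos hβ _
  have hu1 : u < 1 := Real.rpow_lt_one hβ.le hβ' (by norm_num)
  have hpow : ∀ n : ℕ, u ^ n = β ^ ((n : ℝ) / 4) := by
    intro n
    rw [hu_def, ← Real.rpow_natCast (β ^ ((1:ℝ)/4)) n, ← Real.rpow_mul hβ.le]
    ring_nf
  have h4 : u ^ 4 = β := by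
    rw [hpow 4]; norm_num
  have h5 : β ^ ((5:ℝ)/4) = u ^ 5 := by rw [hpow 5]; norm_num
  have h3 : β ^ ((3:ℝ)/4) = u ^ 3 := by rw [hpow 3]; norm_num
  have hsq : Real.sqrt β = u ^ 2 := by
    rw [Real.sqrt_eq_rpow, hpow 2]; norm_num
  have hu5 : u ^ 5 < 1 := pow_lt_one₀ hu.le hu1 (by norm_num)
  have hu5' : 0 < u ^ 5 := by positivity
  have h1u : (0:ℝ) < 1 - u := by linarith
  have h1u5 : (0:ℝ) < 1 - u ^ 5 := by linarith
  -- step 1: triangle inequality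
  have hβ1 : 0 ≤ 1 - β := by linarith
  have htri : ‖β • (A - B) + (1 - β) • C‖ ≤ β * ‖A - B‖ + (1 - β) * ‖C‖ := by
    calc ‖β • (A - B) + (1 - β) • C‖ ≤ ‖β • (A - B)‖ + ‖(1 - β) • C‖ := norm_add_le _ _
      _ = β * ‖A - B‖ + (1 - β) * ‖C‖ := by
          rw [norm_smul, norm_smul, Real.norm_of_nonneg hβ.le, Real.norm_of_nonneg hβ1]
  have h0 : ‖β • (A - B) + (1 - β) • C‖ ^ 2 ≤ (β * ‖A - B‖ + (1 - β) * ‖C‖) ^ 2 :=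
    pow_le_pow_left₀ (norm_nonneg _) htri 2
  -- step 2: first Young split with t = u^5
  have hy1 : (β * ‖A - B‖ + (1 - β) * ‖C‖) ^ 2
      ≤ u ^ 3 * ‖A - B‖ ^ 2 + (1 - β) ^ 2 / (1 - u ^ 5) * ‖C‖ ^ 2 := by
    have := young_sq_aux (a := β * ‖A - B‖) (b := (1 - β) * ‖C‖) hu5' hu5
    have e1 : (β * ‖A - B‖) ^ 2 / u ^ 5 = u ^ 3 * ‖A - B‖ ^ 2 := by
      rw [← h4]; field_simp
    have e2 : ((1 - β) * ‖C‖) ^ 2 / (1 - u ^ 5) = (1 - β) ^ 2 / (1 - u ^ 5) * ‖C‖ ^ 2 := by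
      ring
    rw [e1, e2] at this; exact this
  -- step 3: second Young split with t = u
  have htri2 : ‖A - B‖ ≤ ‖A‖ + ‖B‖ := norm_sub_le _ _
  have hy2 : ‖A - B‖ ^ 2 ≤ ‖A‖ ^ 2 / u + ‖B‖ ^ 2 / (1 - u) := by
    calc ‖A - B‖ ^ 2 ≤ (‖A‖ + ‖B‖) ^ 2 := pow_le_pow_left₀ (norm_nonneg _) htri2 2
      _ ≤ _ := young_sq_aux hu hu1
  -- ceiling bound
  have hceil : (1 - u ^ 5)⁻¹ ≤ (⌈(1 - β ^ ((5 : ℝ) / 4))⁻¹⌉₊ : ℝ) := by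
    rw [h5]; exact Nat.le_ceil _
  have hC : (1 - β) ^ 2 / (1 - u ^ 5) * ‖C‖ ^ 2
      ≤ (⌈(1 - β ^ ((5 : ℝ) / 4))⁻¹⌉₊ : ℝ) * (1 - β) ^ 2 * ‖C‖ ^ 2 := by
    have : (1 - β) ^ 2 / (1 - u ^ 5) ≤ (⌈(1 - β ^ ((5 : ℝ) / 4))⁻¹⌉₊ : ℝ) * (1 - β) ^ 2 := by
      rw [div_eq_mul_inv]
      nlinarith [sq_nonneg (1 - β), inv_pos.mpr h1u5]
    exact mul_le_mul_of_nonneg_right this (by positivity)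
  -- middle term
  have hmid : u ^ 3 * (‖A‖ ^ 2 / u + ‖B‖ ^ 2 / (1 - u))
      = u ^ 2 * ‖A‖ ^ 2 + u ^ 3 / (1 - u) * ‖B‖ ^ 2 := by
    field_simp
  calc ‖β • (A - B) + (1 - β) • C‖ ^ 2
      ≤ u ^ 3 * ‖A - B‖ ^ 2 + (1 - β) ^ 2 / (1 - u ^ 5) * ‖C‖ ^ 2 := le_trans h0 hy1
    _ ≤ u ^ 3 * (‖A‖ ^ 2 / u + ‖B‖ ^ 2 / (1 - u)) + (1 - β) ^ 2 / (1 - u ^ 5) * ‖C‖ ^ 2 := by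
        have := mul_le_mul_of_nonneg_left hy2 (by positivity : (0:ℝ) ≤ u ^ 3)
        linarith
    _ = u ^ 2 * ‖A‖ ^ 2 + u ^ 3 / (1 - u) * ‖B‖ ^ 2 + (1 - β) ^ 2 / (1 - u ^ 5) * ‖C‖ ^ 2 := by
        rw [hmid]
    _ ≤ Real.sqrt β * ‖A‖ ^ 2 + β ^ ((3 : ℝ) / 4) / (1 - β ^ ((1 : ℝ) / 4)) * ‖B‖ ^ 2
        + (⌈(1 - β ^ ((5 : ℝ) / 4))⁻¹⌉₊ : ℝ) * (1 - β) ^ 2 * ‖C‖ ^ 2 := by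
        rw [hsq, h3]
        exact add_le_add_right hC _
end
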